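/- arXiv:1608.02279 — 8 statements merged into one kernel-verified Lean document; each statement's English description precedes it below -/
import Mathlib

section
/- Let k and r be positive integers with r ≤ k, and let a_1, …, a_r be positive integers with a_1 + ⋯ + a_r = k. Any set partition of [n] having at least r blocks each of size at least k - r + 1 contains the layered partition L_{a_1,…,a_r}. -/
/-- `i` and `j` lie in the same block of the set partition `P` of `[n] = {1, …, n}`. -/
def SameBlock {n : ℕ} (P : Finpartition (Finset.Icc 1 n)) (i j : ℕ) : Prop :=
  ∃ B ∈ P.parts, i ∈ B ∧ j ∈ B

instance {n : ℕ} (P : Finpartition (Finset.Icc 1 n)) (i j : ℕ) : Decidable (SameBlock P i j) :=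
  inferInstanceAs (Decidable (∃ B ∈ P.parts, i ∈ B ∧ j ∈ B))

/-- The set partition `σ` of `[n]` contains the set partition `τ` of `[k]`: there is a
strictly increasing map `f : [k] → [n]` such that `i, j` lie in the same block of `τ`
iff `f i, f j` lie in the same block of `σ`.  Otherwise `σ` avoids `τ`. -/
def SetPartContains {n k : ℕ} (σ : Finpartition (Finset.Icc 1 n))
    (τ : Finpartition (Finset.Icc 1 k)) : Prop :=
  ∃ f : ℕ → ℕ,
    (∀ i ∈ Finset.Icc 1 k, f i ∈ Finset.Icc 1 n) ∧
    (∀ i ∈ Finset.Icc 1 k, ∀ j ∈ Finset.Icc 1 k, i < j → f i < f j) ∧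
    (∀ i ∈ Finset.Icc 1 k, ∀ j ∈ Finset.Icc 1 k,
      (SameBlock τ i j ↔ SameBlock σ (f i) (f j)))

/-- `A n τ` is the number of set partitions of `[n]` avoiding `τ`. -/
noncomputable def A (n : ℕ) {k : ℕ} (τ : Finpartition (Finset.Icc 1 k)) : ℕ :=
  Nat.card {σ : Finpartition (Finset.Icc 1 n) // ¬ SetPartContains σ τ}

/-- `τ` is the layered partition `L_{a 0, …, a (r-1)}` of `[k]`, whose blocks are the
consecutive intervals `{1, …, a 0}, {a 0 + 1, …, a 0 + a 1}, …` of lengths `a 0, …, a (r-1)`. -/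
def IsLayered {k : ℕ} (r : ℕ) (a : ℕ → ℕ) (τ : Finpartition (Finset.Icc 1 k)) : Prop :=
  τ.parts = (Finset.range r).image
    (fun j => Finset.Icc ((∑ i ∈ Finset.range j, a i) + 1) (∑ i ∈ Finset.range (j + 1), a i))

/-- A uniform set partition of `[n]` with block size `m`: it consists of `n/m` blocks each of
size `m`, and for every `0 ≤ j < m` the interval `S_j = {j·(n/m)+1, …, (j+1)·(n/m)}` contains
exactly one element from each block. -/
def IsUniform (n m : ℕ) (σ : Finpartition (Finset.Icc 1 n)) : Prop :=
  σ.parts.card = n / m ∧ (∀ B ∈ σ.parts, B.card = m) ∧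
    ∀ j < m, ∀ B ∈ σ.parts,
      (Finset.Icc (j * (n / m) + 1) ((j + 1) * (n / m)) ∩ B).card = 1

/-- `P` is the permutation partition of `[2m]` associated to the permutation `π` of `[m]`:
its blocks are `{i, m + π i}` for `i ∈ [m]` (with `Fin m` representing `[m]` via `i ↦ i + 1`). -/
def IsPermPartition (m : ℕ) (π : Equiv.Perm (Fin m))
    (P : Finpartition (Finset.Icc 1 (2 * m))) : Prop :=
  P.parts = Finset.univ.image
    (fun i : Fin m => ({(i : ℕ) + 1, m + (π i : ℕ) + 1} : Finset ℕ))


open Finset in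

lemma key : ∀ (r : ℕ) (a : ℕ → ℕ) (𝒞 : Finset (Finset ℕ)) (N : ℕ),
    𝒞.card = r →
    ((𝒞 : Set (Finset ℕ)).PairwiseDisjoint id) →
    (∀ j < r, 0 < a j) →
    (∀ C ∈ 𝒞, (∑ j ∈ Finset.range r, a j) + 1 ≤ r + (C.filter (· < N)).card) →
    ∃ S g : ℕ → Finset ℕ,
      (∀ j < r, g j ∈ 𝒞 ∧ S j ⊆ g j ∧ (S j).card = a j ∧ ∀ x ∈ S j, x < N) ∧
      (∀ i < r, ∀ j < r, i < j → ∀ x ∈ S i, ∀ y ∈ S j, x < y) ∧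
      (∀ i < r, ∀ j < r, i ≠ j → g i ≠ g j) := by
  intro r
  induction r with
  | zero =>
    intro a 𝒞 N _ _ _ _
    exact ⟨fun _ => ∅, fun _ => ∅, by simp, by simp, by simp⟩
  | succ r IH =>
    intro a 𝒞 N hcard hdisj ha hbig
    classical
    -- the set of candidate thresholds
    set X : Finset ℕ := (𝒞.biUnion id).filter
      (fun x => x < N ∧ ∃ C ∈ 𝒞, x ∈ C ∧ a r ≤ (C.filter (fun y => x ≤ y ∧ y < N)).card) with hX
    -- sum over range r
    have hsumr : r ≤ ∑ j ∈ Finset.range r, a j := by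
      calc r = (Finset.range r).card • 1 := by simp
      _ ≤ ∑ j ∈ Finset.range r, a j :=
        Finset.card_nsmul_le_sum _ _ _ (fun x hx => ha x (by simp at hx; omega))
    -- X is nonempty
    have hCne : 𝒞.Nonempty := Finset.card_pos.mp (by omega)
    obtain ⟨C₀, hC₀⟩ := hCne
    have hXne : X.Nonempty := by
      have hb := hbig C₀ hC₀
      have hc0 : a r ≤ (C₀.filter (· < N)).card := by
        have : ∑ j ∈ Finset.range (r+1), a j = (∑ j ∈ Finset.range r, a j) + a r :=
          Finset.sum_range_succ a r
        omega
      have hne : (C₀.filter (· < N)).Nonempty := by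
        apply Finset.card_pos.mp
        have := ha r (by omega); omega
      set x₀ := (C₀.filter (· < N)).min' hne with hx₀
      have hx₀mem := (C₀.filter (· < N)).min'_mem hne
      simp only [Finset.mem_filter] at hx₀mem
      refine ⟨x₀, ?_⟩
      simp only [hX, Finset.mem_filter, Finset.mem_biUnion]
      refine ⟨⟨C₀, hC₀, hx₀mem.1⟩, hx₀mem.2, C₀, hC₀, hx₀mem.1, ?_⟩
      refine le_trans hc0 (Finset.card_le_card ?_)
      intro y hy
      simp only [Finset.mem_filter] at hy ⊢
      exact ⟨hy.1, (C₀.filter (· < N)).min'_le y (Finset.mem_filter.mpr hy), hy.2⟩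
    obtain ⟨x, hxX, hxmax⟩ : ∃ x ∈ X, ∀ y ∈ X, y ≤ x :=
      ⟨X.max' hXne, X.max'_mem hXne, fun y hy => X.le_max' y hy⟩
    simp only [hX, Finset.mem_filter, Finset.mem_biUnion] at hxX
    obtain ⟨-, hxN, C, hC, hxC, hCcard⟩ := hxX
    -- choose the top layer
    obtain ⟨T, hTsub, hTcard⟩ := Finset.exists_subset_card_eq hCcard
    -- every other block has few elements in [x, N)
    have hfew : ∀ D ∈ 𝒞.erase C, (D.filter (fun y => x ≤ y ∧ y < N)).card < a r := by
      intro D hD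
      rw [Finset.mem_erase] at hD
      by_contra hcon
      push_neg at hcon
      have hEne : (D.filter (fun y => x ≤ y ∧ y < N)).Nonempty := by
        apply Finset.card_pos.mp; have := ha r (by omega); omega
      set x' := (D.filter (fun y => x ≤ y ∧ y < N)).min' hEne with hx'
      have hx'mem := (D.filter _).min'_mem hEne
      simp only [Finset.mem_filter] at hx'mem
      have heq : D.filter (fun y => x' ≤ y ∧ y < N) = D.filter (fun y => x ≤ y ∧ y < N) := by
        apply Finset.Subset.antisymm
        · intro y hy; simp only [Finset.mem_filter] at hy ⊢
          exact ⟨hy.1, le_trans hx'mem.2.1 hy.2.1, hy.2.2⟩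
        · intro y hy
          have := (D.filter (fun y => x ≤ y ∧ y < N)).min'_le y hy
          simp only [Finset.mem_filter] at hy ⊢
          exact ⟨hy.1, this, hy.2.2⟩
      have hx'X : x' ∈ X := by
        simp only [hX, Finset.mem_filter, Finset.mem_biUnion]
        exact ⟨⟨D, hD.2, hx'mem.1⟩, hx'mem.2.2, D, hD.2, hx'mem.1, by rw [heq]; exact hcon⟩
      have hle := hxmax x' hx'X
      have hxx : x' = x := le_antisymm hle hx'mem.2.1
      have hdCD : Disjoint C D := hdisj hC hD.2 (Ne.symm hD.1)
      exact (Finset.disjoint_left.mp hdCD hxC) (hxx ▸ hx'mem.1)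
    -- apply IH
    have hIHbig : ∀ D ∈ 𝒞.erase C, (∑ j ∈ Finset.range r, a j) + 1 ≤ r + (D.filter (· < x)).card := by
      intro D hD
      have h1 := hfew D hD
      have h2 := hbig D (Finset.mem_of_mem_erase hD)
      have hsub : D.filter (· < N) ⊆ D.filter (· < x) ∪ D.filter (fun y => x ≤ y ∧ y < N) := by
        intro y hy
        simp only [Finset.mem_union, Finset.mem_filter] at hy ⊢
        obtain ⟨h1', h2'⟩ := hy
        rcases lt_or_ge y x with h | h
        · exact Or.inl ⟨h1', h⟩
        · exact Or.inr ⟨h1', h, h2'⟩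
      have hsplit : (D.filter (· < N)).card ≤ (D.filter (· < x)).card + (D.filter (fun y => x ≤ y ∧ y < N)).card :=
        le_trans (Finset.card_le_card hsub) (Finset.card_union_le _ _)
      have hsum : ∑ j ∈ Finset.range (r+1), a j = (∑ j ∈ Finset.range r, a j) + a r :=
        Finset.sum_range_succ a r
      omega
    obtain ⟨S, g, hmain, hord, hinj⟩ := IH a (𝒞.erase C) x (by rw [Finset.card_erase_of_mem hC]; omega)
      (hdisj.subset (by simp [Finset.erase_subset])) (fun j hj => ha j (by omega)) hIHbig
    refine ⟨fun j => if j = r then T else S j, fun j => if j = r then C else g j, ?_, ?_, ?_⟩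
    · intro j hj
      by_cases hjr : j = r
      · simp only [hjr, if_pos rfl]
        refine ⟨hC, fun y hy => (Finset.mem_filter.mp (hTsub hy)).1, hTcard, ?_⟩
        intro y hy; exact (Finset.mem_filter.mp (hTsub hy)).2.2
      · have hjr' : j < r := by omega
        obtain ⟨h1, h2, h3, h4⟩ := hmain j hjr'
        simp only [if_neg hjr]
        exact ⟨Finset.mem_of_mem_erase h1, h2, h3, fun y hy => lt_trans (h4 y hy) hxN⟩
    · intro i hi j hj hij y hy z hz
      by_cases hjr : j = r
      · have hir : i ≠ r := by omega
        simp only [if_neg hir] at hy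
        simp only [hjr, if_pos rfl] at hz
        have h1 := (hmain i (by omega)).2.2.2 y hy
        have h2 := (Finset.mem_filter.mp (hTsub hz)).2.1
        omega
      · have hir : i ≠ r := by omega
        simp only [if_neg hir] at hy
        simp only [if_neg hjr] at hz
        exact hord i (by omega) j (by omega) hij y hy z hz
    · intro i hi j hj hij
      by_cases hir : i = r
      · have hjr : j ≠ r := fun h => hij (hir.trans h.symm)
        simp only [hir, if_pos rfl, if_neg hjr]
        have := (hmain j (by omega)).1
        rw [Finset.mem_erase] at this
        exact (Ne.symm this.1)
      · by_cases hjr : j = r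
        · subst hjr
          simp only [if_neg hir, if_pos rfl]
          have := (hmain i (by omega)).1
          rw [Finset.mem_erase] at this
          exact this.1
        · simp only [if_neg hir, if_neg hjr]
          exact hinj i (by omega) j (by omega) hij

lemma getD_mem {S : Finset ℕ} {idx : ℕ} (h : idx < S.card) :
    (S.sort (· ≤ ·)).getD idx 0 ∈ S := by
  have hlen : idx < (S.sort (· ≤ ·)).length := by rwa [Finset.length_sort]
  rw [List.getD_eq_getElem _ _ hlen]
  exact (Finset.mem_sort _).mp (List.getElem_mem hlen)

lemma getD_lt {S : Finset ℕ} {i j : ℕ} (hij : i < j) (h : j < S.card) :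
    (S.sort (· ≤ ·)).getD i 0 < (S.sort (· ≤ ·)).getD j 0 := by
  have hlenj : j < (S.sort (· ≤ ·)).length := by rwa [Finset.length_sort]
  have hleni : i < (S.sort (· ≤ ·)).length := lt_trans hij hlenj
  rw [List.getD_eq_getElem _ _ hleni, List.getD_eq_getElem _ _ hlenj]
  have := (Finset.sortedLT_sort S).strictMono_get
    (a := ⟨i, hleni⟩) (b := ⟨j, hlenj⟩) (by simpa [Fin.lt_def] using hij)
  simpa using this

/-- Any set partition of `[n]` with at least `r` blocks of size at least
`k - r + 1` contains the layered partition `L_{a_1,…,a_r}` of `[k]`. -/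
theorem big_blocks_contain_layered (k r : ℕ) (hr : 0 < r) (hrk : r ≤ k) (a : ℕ → ℕ)
    (ha : ∀ i < r, 0 < a i) (hsum : ∑ i ∈ Finset.range r, a i = k)
    (τ : Finpartition (Finset.Icc 1 k)) (hτ : IsLayered r a τ)
    (n : ℕ) (σ : Finpartition (Finset.Icc 1 n))
    (hσ : r ≤ (σ.parts.filter fun B => k - r + 1 ≤ B.card).card) :
    SetPartContains σ τ := by
  classical
  set c : ℕ → ℕ := fun j => ∑ i ∈ Finset.range j, a i with hc
  have hc_def : ∀ j, c j = ∑ i ∈ Finset.range j, a i := fun j => rfl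
  have hc_succ : ∀ j, c (j + 1) = c j + a j := fun j => Finset.sum_range_succ a j
  have hc_mono : ∀ {i j : ℕ}, i ≤ j → c i ≤ c j := by
    intro i j hij
    exact Finset.sum_le_sum_of_subset (Finset.range_subset_range.mpr hij)
  have hc0 : c 0 = 0 := Finset.sum_range_zero a
  have hcr : c r = k := hsum
  set lay : ℕ → ℕ := fun i => ((Finset.range r).filter (fun t => c (t + 1) < i)).card
    with hlaydef
  have hlay_eq : ∀ i, ∀ j < r, c j < i → i ≤ c (j + 1) → lay i = j := by
    intro i j hjr h1 h2
    have hfe : (Finset.range r).filter (fun t => c (t + 1) < i) = Finset.range j := by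
      ext t
      simp only [Finset.mem_filter, Finset.mem_range]
      constructor
      · rintro ⟨htr, hti⟩
        by_contra h
        push_neg at h
        have : c (j + 1) ≤ c (t + 1) := hc_mono (by omega)
        omega
      · intro htj
        have h3 : c (t + 1) ≤ c j := hc_mono (by omega)
        exact ⟨by omega, by omega⟩
    simp only [hlaydef, hfe, Finset.card_range]
  have hlay_spec : ∀ i, 1 ≤ i → i ≤ k → lay i < r ∧ c (lay i) < i ∧ i ≤ c (lay i + 1) := by
    intro i h1 h2
    have h0 : (0 : ℕ) ∈ (Finset.range r).filter (fun t => c t < i) := by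
      simp only [Finset.mem_filter, Finset.mem_range]
      exact ⟨hr, by omega⟩
    have hFne : ((Finset.range r).filter (fun t => c t < i)).Nonempty := ⟨0, h0⟩
    set j := ((Finset.range r).filter (fun t => c t < i)).max' hFne with hj
    have hjmem := ((Finset.range r).filter (fun t => c t < i)).max'_mem hFne
    rw [← hj] at hjmem
    simp only [Finset.mem_filter, Finset.mem_range] at hjmem
    have hnext : i ≤ c (j + 1) := by
      by_contra h
      push_neg at h
      have hj1r : j + 1 < r := by
        by_contra h'
        push_neg at h'
        have : c r ≤ c (j + 1) := hc_mono h'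
        omega
      have hmem : j + 1 ∈ (Finset.range r).filter (fun t => c t < i) := by
        simp only [Finset.mem_filter, Finset.mem_range]
        exact ⟨hj1r, h⟩
      have := ((Finset.range r).filter (fun t => c t < i)).le_max' (j + 1) hmem
      omega
    have heq := hlay_eq i j hjmem.1 hjmem.2 hnext
    rw [heq]
    exact ⟨hjmem.1, hjmem.2, hnext⟩
  -- choose r big blocks
  obtain ⟨𝒞, h𝒞sub, h𝒞card⟩ := Finset.exists_subset_card_eq hσ
  have h𝒞parts : ∀ C ∈ 𝒞, C ∈ σ.parts := fun C hC => (Finset.mem_filter.mp (h𝒞sub hC)).1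
  have hdisj : (↑𝒞 : Set (Finset ℕ)).PairwiseDisjoint id :=
    σ.disjoint.subset (fun C hC => h𝒞parts C hC)
  have hbig : ∀ C ∈ 𝒞, (∑ j ∈ Finset.range r, a j) + 1 ≤ r + (C.filter (· < n + 1)).card := by
    intro C hC
    have h1 : k - r + 1 ≤ C.card := (Finset.mem_filter.mp (h𝒞sub hC)).2
    have h2 : C.filter (· < n + 1) = C := by
      apply Finset.filter_true_of_mem
      intro y hy
      have := σ.le (h𝒞parts C hC) hy
      rw [Finset.mem_Icc] at this
      omega
    rw [h2, hsum]
    omega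
  obtain ⟨S, g, hmain, hord, hinj⟩ := key r a 𝒞 (n + 1) h𝒞card hdisj ha hbig
  set f : ℕ → ℕ := fun i => ((S (lay i)).sort (· ≤ ·)).getD (i - c (lay i) - 1) 0 with hf
  have hfmem : ∀ i, 1 ≤ i → i ≤ k → f i ∈ S (lay i) := by
    intro i h1 h2
    obtain ⟨hl, hlo, hhi⟩ := hlay_spec i h1 h2
    apply getD_mem
    rw [(hmain _ hl).2.2.1]
    have := hc_succ (lay i)
    omega
  have hlay_le : ∀ i j, 1 ≤ i → i ≤ k → 1 ≤ j → j ≤ k → i < j → lay i ≤ lay j := by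
    intro i j h1 h2 h3 h4 hij
    by_contra h
    push_neg at h
    obtain ⟨_, hlo, _⟩ := hlay_spec i h1 h2
    obtain ⟨_, _, hhi⟩ := hlay_spec j h3 h4
    have : c (lay j + 1) ≤ c (lay i) := hc_mono (by omega)
    omega
  -- the three conditions
  refine ⟨f, ?_, ?_, ?_⟩
  · intro i hi
    rw [Finset.mem_Icc] at hi
    have hm := hfmem i hi.1 hi.2
    obtain ⟨hl, _, _⟩ := hlay_spec i hi.1 hi.2
    obtain ⟨hg𝒞, hSg, _, _⟩ := hmain _ hl
    exact σ.le (h𝒞parts _ hg𝒞) (hSg hm)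
  · intro i hi j hj hij
    rw [Finset.mem_Icc] at hi hj
    have hle := hlay_le i j hi.1 hi.2 hj.1 hj.2 hij
    rcases eq_or_lt_of_le hle with heq | hlt
    · obtain ⟨hl, hlo, hhi⟩ := hlay_spec i hi.1 hi.2
      obtain ⟨hl', hlo', hhi'⟩ := hlay_spec j hj.1 hj.2
      rw [hf]
      simp only [← heq]
      apply getD_lt
      · omega
      · rw [(hmain _ hl).2.2.1]
        rw [← heq] at hhi'
        have := hc_succ (lay i)
        omega
    · obtain ⟨hl, _, _⟩ := hlay_spec i hi.1 hi.2
      obtain ⟨hl', _, _⟩ := hlay_spec j hj.1 hj.2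
      exact hord _ hl _ hl' hlt _ (hfmem i hi.1 hi.2) _ (hfmem j hj.1 hj.2)
  · intro i hi j hj
    rw [Finset.mem_Icc] at hi hj
    obtain ⟨hl, hlo, hhi⟩ := hlay_spec i hi.1 hi.2
    obtain ⟨hl', hlo', hhi'⟩ := hlay_spec j hj.1 hj.2
    have hτiff : SameBlock τ i j ↔ lay i = lay j := by
      constructor
      · rintro ⟨B, hB, hiB, hjB⟩
        rw [hτ] at hB
        rw [Finset.mem_image] at hB
        obtain ⟨t, ht, rfl⟩ := hB
        rw [Finset.mem_range] at ht
        rw [Finset.mem_Icc] at hiB hjB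
        rw [← hc_def t, ← hc_def (t + 1)] at hiB hjB
        rw [hlay_eq i t ht (by omega) hiB.2, hlay_eq j t ht (by omega) hjB.2]
      · intro heq
        refine ⟨Finset.Icc (c (lay i) + 1) (c (lay i + 1)), ?_, ?_, ?_⟩
        · rw [hτ, Finset.mem_image]
          exact ⟨lay i, Finset.mem_range.mpr hl, by rw [← hc_def (lay i), ← hc_def (lay i + 1)]⟩
        · rw [Finset.mem_Icc]; omega
        · rw [Finset.mem_Icc]; rw [heq]; omega
    have hσiff : SameBlock σ (f i) (f j) ↔ lay i = lay j := by
      constructor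
      · rintro ⟨B, hB, hiB, hjB⟩
        have h1 : B = g (lay i) := by
          apply σ.eq_of_mem_parts hB (h𝒞parts _ (hmain _ hl).1) hiB
          exact (hmain _ hl).2.1 (hfmem i hi.1 hi.2)
        have h2 : B = g (lay j) := by
          apply σ.eq_of_mem_parts hB (h𝒞parts _ (hmain _ hl').1) hjB
          exact (hmain _ hl').2.1 (hfmem j hj.1 hj.2)
        by_contra hne
        exact hinj _ hl _ hl' hne (h1 ▸ h2)
      · intro heq
        refine ⟨g (lay i), h𝒞parts _ (hmain _ hl).1, (hmain _ hl).2.1 (hfmem i hi.1 hi.2), ?_⟩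
        have := (hmain _ hl').2.1 (hfmem j hj.1 hj.2)
        rw [heq]
        exact this
    rw [hτiff, hσiff]
end

section
/- Let k and r be positive integers with r < k and let n be a positive integer. The number of set partitions of [n] having at most r - 1 blocks of size at least k - r + 1 is at most ((k+1)/2)^(2n) · n^(n(1 - 1/(k-r))). -/
namespace FBB

variable {n : ℕ}

/-- minimum of a finset of naturals (0 if empty) -/
def μ (B : Finset ℕ) : ℕ := if h : B.Nonempty then B.min' h else 0

lemma μ_mem {B : Finset ℕ} (h : B.Nonempty) : μ B ∈ B := by
  simp [μ, h]; exact B.min'_mem h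

abbrev Idx (n : ℕ) := {x : ℕ // x ∈ Finset.Icc 1 n}

abbrev SP (n s r : ℕ) :=
  {σ : Finpartition (Finset.Icc 1 n) // (σ.parts.filter fun B => s + 1 ≤ B.card).card ≤ r - 1}

variable {s r M : ℕ}

/-- label function -/
noncomputable def lbl (s r : ℕ) (σ : SP n s r) (i : Idx n) : Fin (r + 1) :=
  if hb : s + 1 ≤ (σ.1.part i.1).card then
    ⟨(σ.1.parts.filter fun B => s + 1 ≤ B.card).toList.idxOf (σ.1.part i.1), by
      have hm : (σ.1.part i.1) ∈ (σ.1.parts.filter fun B => s + 1 ≤ B.card).toList :=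
        Finset.mem_toList.2 (Finset.mem_filter.2 ⟨σ.1.part_mem.2 i.2, hb⟩)
      have h1 := List.idxOf_lt_length_iff.2 hm
      rw [Finset.length_toList] at h1
      have h2 := σ.2
      omega⟩
  else if (i : ℕ) = μ (σ.1.part i.1) then ⟨r - 1, by omega⟩ else ⟨r, by omega⟩

lemma lbl_big_val {σ : SP n s r} {i : Idx n} (hb : s + 1 ≤ (σ.1.part i.1).card) :
    (lbl s r σ i : ℕ) = (σ.1.parts.filter fun B => s + 1 ≤ B.card).toList.idxOf (σ.1.part i.1) := by
  simp [lbl, hb]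

lemma lbl_big_lt {σ : SP n s r} {i : Idx n} (hb : s + 1 ≤ (σ.1.part i.1).card) :
    (lbl s r σ i : ℕ) < r - 1 := by
  rw [lbl_big_val hb]
  have hm : (σ.1.part i.1) ∈ (σ.1.parts.filter fun B => s + 1 ≤ B.card).toList :=
    Finset.mem_toList.2 (Finset.mem_filter.2 ⟨σ.1.part_mem.2 i.2, hb⟩)
  have h1 := List.idxOf_lt_length_iff.2 hm
  rw [Finset.length_toList] at h1
  have h2 := σ.2
  -- need r ≥ 1? indexOf < card ≤ r - 1
  omega

lemma lbl_lt_iff {σ : SP n s r} {i : Idx n} :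
    (lbl s r σ i : ℕ) < r - 1 ↔ s + 1 ≤ (σ.1.part i.1).card := by
  constructor
  · intro h
    by_contra hb
    unfold lbl at h
    rw [dif_neg hb] at h
    split at h <;> simp at h <;> omega
  · exact lbl_big_lt

lemma lbl_eq_last_iff (hr : 0 < r) {σ : SP n s r} {i : Idx n} :
    lbl s r σ i = Fin.last r ↔
      (¬ (s + 1 ≤ (σ.1.part i.1).card) ∧ (i : ℕ) ≠ μ (σ.1.part i.1)) := by
  constructor
  · intro h
    have hv := congrArg Fin.val h
    simp [Fin.last] at hv
    by_cases hb : s + 1 ≤ (σ.1.part i.1).card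
    · have := lbl_big_lt hb; omega
    · refine ⟨hb, ?_⟩
      intro hm
      unfold lbl at hv
      rw [dif_neg hb, if_pos hm] at hv
      simp at hv; omega
  · rintro ⟨hb, hm⟩
    unfold lbl
    rw [dif_neg hb, if_neg hm]
    rfl

lemma lbl_eq_min_iff (hr : 0 < r) {σ : SP n s r} {i : Idx n} :
    lbl s r σ i = ⟨r - 1, by omega⟩ ↔
      (¬ (s + 1 ≤ (σ.1.part i.1).card) ∧ (i : ℕ) = μ (σ.1.part i.1)) := by
  constructor
  · intro h
    have hv := congrArg Fin.val h
    simp at hv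
    by_cases hb : s + 1 ≤ (σ.1.part i.1).card
    · have := lbl_big_lt hb; omega
    · refine ⟨hb, ?_⟩
      by_contra hm
      unfold lbl at hv
      rw [dif_neg hb, if_neg hm] at hv
      simp at hv; omega
  · rintro ⟨hb, hm⟩
    unfold lbl
    rw [dif_neg hb, if_pos hm]

lemma big_parts_eq {σ : SP n s r} {i j : Idx n} (hbi : s + 1 ≤ (σ.1.part i.1).card)
    (hl : lbl s r σ i = lbl s r σ j) : σ.1.part i.1 = σ.1.part j.1 := by
  have hbj : s + 1 ≤ (σ.1.part j.1).card := by
    rw [← lbl_lt_iff (σ := σ) (i := j)]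
    have := lbl_big_lt hbi
    rw [congrArg Fin.val hl] at this
    exact this
  have hv := congrArg Fin.val hl
  rw [lbl_big_val hbi, lbl_big_val hbj] at hv
  have hmi : (σ.1.part i.1) ∈ (σ.1.parts.filter fun B => s + 1 ≤ B.card).toList :=
    Finset.mem_toList.2 (Finset.mem_filter.2 ⟨σ.1.part_mem.2 i.2, hbi⟩)
  have hmj : (σ.1.part j.1) ∈ (σ.1.parts.filter fun B => s + 1 ≤ B.card).toList :=
    Finset.mem_toList.2 (Finset.mem_filter.2 ⟨σ.1.part_mem.2 j.2, hbj⟩)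
  have h1 := List.idxOf_lt_length_iff.2 hmi
  have h2 := List.idxOf_lt_length_iff.2 hmj
  have e1 := List.idxOf_get (a := σ.1.part i.1) h1
  have e2 := List.idxOf_get (a := σ.1.part j.1) h2
  rw [← e1, ← e2]
  congr 1
  exact Fin.ext hv

/-- the sorted list of "non-minimum, small block" elements -/
noncomputable def nmList (s r : ℕ) (σ : SP n s r) : List (Idx n) :=
  ((Finset.Icc 1 n).attach.filter fun i => lbl s r σ i = Fin.last r).sort (· ≤ ·)

/-- pointer function -/
noncomputable def ptr (s r M : ℕ) (hn : 0 < n) (σ : SP n s r) (j : Fin M) : Idx n :=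
  if h : (j : ℕ) < (nmList s r σ).length then
    ⟨μ (σ.1.part ((nmList s r σ).get ⟨j, h⟩ : Idx n).1), by
      have hi := ((nmList s r σ).get ⟨j, h⟩ : Idx n).2
      exact σ.1.le (σ.1.part_mem.2 hi) (μ_mem ⟨_, σ.1.mem_part hi⟩)⟩
  else ⟨1, by simp [Finset.mem_Icc]; omega⟩



noncomputable def enc (s r M : ℕ) (hn : 0 < n) (σ : SP n s r) :
    (Idx n → Fin (r + 1)) × (Fin M → Idx n) :=
  (lbl s r σ, ptr s r M hn σ)

lemma nm_mem {σ : SP n s r} {i : Idx n} (h : lbl s r σ i = Fin.last r) :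
    i ∈ nmList s r σ := by
  unfold nmList
  rw [Finset.mem_sort]
  exact Finset.mem_filter.2 ⟨Finset.mem_attach _ _, h⟩

lemma ptr_spec {σ : SP n s r} {i : Idx n} (hn : 0 < n) (hM : (nmList s r σ).length ≤ M)
    (h : lbl s r σ i = Fin.last r) :
    ∃ t : Fin M, (t : ℕ) = (nmList s r σ).idxOf i ∧
      (ptr s r M hn σ t : ℕ) = μ (σ.1.part i.1) := by
  have hiL := nm_mem h
  have htl : (nmList s r σ).idxOf i < (nmList s r σ).length := List.idxOf_lt_length_iff.2 hiL
  refine ⟨⟨(nmList s r σ).idxOf i, lt_of_lt_of_le htl hM⟩, rfl, ?_⟩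
  unfold ptr
  rw [dif_pos htl]
  simp [List.idxOf_get htl]

lemma part_subset (hr : 0 < r) (hn : 0 < n)
    (hM : ∀ σ : SP n s r, (nmList s r σ).length ≤ M) (σ τ : SP n s r)
    (he : enc s r M hn σ = enc s r M hn τ) (i : Idx n) :
    σ.1.part i.1 ⊆ τ.1.part i.1 := by
  have hL : lbl s r σ = lbl s r τ := congrArg Prod.fst he
  have hP : ptr s r M hn σ = ptr s r M hn τ := congrArg Prod.snd he
  have hnm : nmList s r σ = nmList s r τ := by unfold nmList; rw [hL]
  have hbigiff : ∀ j : Idx n,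
      (s + 1 ≤ (σ.1.part j.1).card) ↔ (s + 1 ≤ (τ.1.part j.1).card) := by
    intro j
    rw [← lbl_lt_iff (σ := σ), ← lbl_lt_iff (σ := τ), hL]
  have hmin : ∀ j : Idx n, ¬ (s + 1 ≤ (σ.1.part j.1).card) →
      μ (σ.1.part j.1) = μ (τ.1.part j.1) := by
    intro j hb
    by_cases hm : (j : ℕ) = μ (σ.1.part j.1)
    · have h1 : lbl s r σ j = ⟨r - 1, by omega⟩ := (lbl_eq_min_iff hr).2 ⟨hb, hm⟩
      have h2 : lbl s r τ j = ⟨r - 1, by omega⟩ := (congrFun hL j).symm.trans h1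
      obtain ⟨_, hmτ⟩ := (lbl_eq_min_iff hr).1 h2
      rw [← hm, ← hmτ]
    · have h1 : lbl s r σ j = Fin.last r := (lbl_eq_last_iff hr).2 ⟨hb, hm⟩
      have h1τ : lbl s r τ j = Fin.last r := (congrFun hL j).symm.trans h1
      obtain ⟨t, ht, htv⟩ := ptr_spec hn (hM σ) h1
      obtain ⟨t', ht', htv'⟩ := ptr_spec hn (hM τ) h1τ
      have htt : t = t' := Fin.ext (by rw [ht, ht', hnm])
      rw [← htv, ← htv', htt, hP]
  by_cases hb : s + 1 ≤ (σ.1.part i.1).card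
  · intro x hx
    have hxV : x ∈ Finset.Icc 1 n := σ.1.le (σ.1.part_mem.2 i.2) hx
    have hpx : σ.1.part x = σ.1.part i.1 := σ.1.part_eq_of_mem (σ.1.part_mem.2 i.2) hx
    have hbx : s + 1 ≤ (σ.1.part (⟨x, hxV⟩ : Idx n).1).card := by
      simpa [hpx] using hb
    have hlx : lbl s r σ ⟨x, hxV⟩ = lbl s r σ i := by
      apply Fin.ext
      rw [lbl_big_val hbx, lbl_big_val hb]
      simp [hpx]
    have hlxτ : lbl s r τ ⟨x, hxV⟩ = lbl s r τ i := by
      rw [← congrFun hL ⟨x, hxV⟩, ← congrFun hL i, hlx]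
    have hbτ : s + 1 ≤ (τ.1.part (⟨x, hxV⟩ : Idx n).1).card := (hbigiff _).1 hbx
    have := big_parts_eq hbτ hlxτ
    rw [← this]
    exact τ.1.mem_part hxV
  · intro x hx
    have hxV : x ∈ Finset.Icc 1 n := σ.1.le (σ.1.part_mem.2 i.2) hx
    have hpx : σ.1.part x = σ.1.part i.1 := σ.1.part_eq_of_mem (σ.1.part_mem.2 i.2) hx
    have hbx : ¬ s + 1 ≤ (σ.1.part (⟨x, hxV⟩ : Idx n).1).card := by
      simpa [hpx] using hb
    have e1 : μ (τ.1.part x) = μ (τ.1.part i.1) := by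
      rw [← hmin ⟨x, hxV⟩ hbx, ← hmin i hb]
      simp [hpx]
    have hne1 : (τ.1.part x).Nonempty := ⟨x, τ.1.mem_part hxV⟩
    have hne2 : (τ.1.part i.1).Nonempty := ⟨i.1, τ.1.mem_part i.2⟩
    have hm1 := μ_mem hne1
    have hm2 := μ_mem hne2
    rw [e1] at hm1
    have : τ.1.part x = τ.1.part i.1 :=
      τ.1.eq_of_mem_parts (τ.1.part_mem.2 hxV) (τ.1.part_mem.2 i.2) hm1 hm2
    rw [← this]
    exact τ.1.mem_part hxV

lemma enc_inj (hr : 0 < r) (hn : 0 < n)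
    (hM : ∀ σ : SP n s r, (nmList s r σ).length ≤ M) :
    Function.Injective (enc s r M hn (n := n)) := by
  intro σ τ he
  have hpart : ∀ i : Idx n, σ.1.part i.1 = τ.1.part i.1 := fun i =>
    Finset.Subset.antisymm (part_subset hr hn hM σ τ he i)
      (part_subset hr hn hM τ σ he.symm i)
  have hparts : σ.1.parts = τ.1.parts := by
    ext B
    constructor
    · intro hB
      obtain ⟨x, hx⟩ := σ.1.nonempty_of_mem_parts hB
      have hxV : x ∈ Finset.Icc 1 n := σ.1.le hB hx
      have : σ.1.part x = B := σ.1.part_eq_of_mem hB hx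
      rw [← this, hpart ⟨x, hxV⟩]
      exact τ.1.part_mem.2 hxV
    · intro hB
      obtain ⟨x, hx⟩ := τ.1.nonempty_of_mem_parts hB
      have hxV : x ∈ Finset.Icc 1 n := τ.1.le hB hx
      have : τ.1.part x = B := τ.1.part_eq_of_mem hB hx
      rw [← this, ← hpart ⟨x, hxV⟩]
      exact σ.1.part_mem.2 hxV
  exact Subtype.ext (Finpartition.ext hparts)



lemma nmList_mul_le (hr : 0 < r) (hs : 0 < s) (σ : SP n s r) :
    (nmList s r σ).length * s ≤ (s - 1) * n := by
  have hlen : (nmList s r σ).length =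
      ((Finset.Icc 1 n).attach.filter fun i => lbl s r σ i = Fin.last r).card :=
    Finset.length_sort _
  set Sm := σ.1.parts.filter (fun B => B.card ≤ s) with hSm
  have h1 : ((Finset.Icc 1 n).attach.filter fun i => lbl s r σ i = Fin.last r).card ≤
      ∑ B ∈ Sm, (B.card - 1) := by
    have hsub : ∀ i ∈ ((Finset.Icc 1 n).attach.filter fun i => lbl s r σ i = Fin.last r),
        (i : ℕ) ∈ Sm.biUnion (fun B => B.erase (μ B)) := by
      intro i hi
      obtain ⟨hb, hm⟩ := (lbl_eq_last_iff hr).1 (Finset.mem_filter.1 hi).2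
      refine Finset.mem_biUnion.2 ⟨σ.1.part i.1, ?_, ?_⟩
      · exact Finset.mem_filter.2 ⟨σ.1.part_mem.2 i.2, by omega⟩
      · exact Finset.mem_erase.2 ⟨fun h => hm h, σ.1.mem_part i.2⟩
    calc ((Finset.Icc 1 n).attach.filter fun i => lbl s r σ i = Fin.last r).card
        ≤ (Sm.biUnion (fun B => B.erase (μ B))).card := by
          apply Finset.card_le_card_of_injOn _ hsub
          intro a _ b _ hab
          exact Subtype.ext hab
      _ ≤ ∑ B ∈ Sm, (B.erase (μ B)).card := Finset.card_biUnion_le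
      _ = ∑ B ∈ Sm, (B.card - 1) := by
          apply Finset.sum_congr rfl
          intro B hB
          have hne : B.Nonempty :=
            σ.1.nonempty_of_mem_parts (Finset.mem_filter.1 hB).1
          rw [Finset.card_erase_of_mem (μ_mem hne)]
  have h2 : ∀ B ∈ Sm, s * (B.card - 1) ≤ (s - 1) * B.card := by
    intro B hB
    have hc1 : 1 ≤ B.card :=
      Finset.card_pos.2 (σ.1.nonempty_of_mem_parts (Finset.mem_filter.1 hB).1)
    have hcs : B.card ≤ s := (Finset.mem_filter.1 hB).2
    zify [hc1, hs]
    nlinarith [hc1, hcs]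
  have h3 : ∑ B ∈ Sm, B.card ≤ n := by
    calc ∑ B ∈ Sm, B.card ≤ ∑ B ∈ σ.1.parts, B.card :=
          Finset.sum_le_sum_of_subset (Finset.filter_subset _ _)
      _ = (Finset.Icc 1 n).card := σ.1.sum_card_parts
      _ = n := by rw [Nat.card_Icc]; omega
  calc (nmList s r σ).length * s
      = s * ((Finset.Icc 1 n).attach.filter fun i => lbl s r σ i = Fin.last r).card := by
        rw [hlen, Nat.mul_comm]
    _ ≤ s * ∑ B ∈ Sm, (B.card - 1) := Nat.mul_le_mul_left _ h1
    _ = ∑ B ∈ Sm, s * (B.card - 1) := Finset.mul_sum _ _ _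
    _ ≤ ∑ B ∈ Sm, (s - 1) * B.card := Finset.sum_le_sum h2
    _ = (s - 1) * ∑ B ∈ Sm, B.card := (Finset.mul_sum _ _ _).symm
    _ ≤ (s - 1) * n := Nat.mul_le_mul_left _ h3

lemma nmList_le_div (hr : 0 < r) (hs : 0 < s) (σ : SP n s r) :
    (nmList s r σ).length ≤ (s - 1) * n / s :=
  (Nat.le_div_iff_mul_le hs).2 (nmList_mul_le hr hs σ)

lemma card_SP_le (hr : 0 < r) (hs : 0 < s) (hn : 0 < n) :
    Nat.card (SP n s r) ≤ (r + 1) ^ n * n ^ ((s - 1) * n / s) := by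
  have hinj := enc_inj (M := (s - 1) * n / s) hr hn (fun σ => nmList_le_div hr hs σ)
  have hle := Nat.card_le_card_of_injective _ hinj
  calc Nat.card (SP n s r) ≤
      Nat.card ((Idx n → Fin (r + 1)) × (Fin ((s - 1) * n / s) → Idx n)) := hle
    _ = (r + 1) ^ n * n ^ ((s - 1) * n / s) := by
      rw [Nat.card_eq_fintype_card]
      rw [Fintype.card_prod, Fintype.card_fun, Fintype.card_fun]
      simp [Fintype.card_coe, Nat.card_Icc]


end FBB

/-- The number of set partitions of `[n]` with at most `r - 1` blocks of size
at least `k - r + 1` is at most `((k+1)/2)^(2n) · n^(n(1 - 1/(k-r)))`. -/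
theorem few_big_blocks_bound (k r n : ℕ) (hr : 0 < r) (hrk : r < k) (hn : 0 < n) :
    (Nat.card {σ : Finpartition (Finset.Icc 1 n) //
        (σ.parts.filter fun B => k - r + 1 ≤ B.card).card ≤ r - 1} : ℝ) ≤
      (((k : ℝ) + 1) / 2) ^ (2 * n) * (n : ℝ) ^ ((n : ℝ) * (1 - 1 / ((k : ℝ) - r))) := by
  have hs : 0 < k - r := by omega
  have hcard := FBB.card_SP_le (n := n) (s := k - r) (r := r) hr hs hn
  set M := (k - r - 1) * n / (k - r) with hM
  have hkr : ((k : ℝ) - r) = ((k - r : ℕ) : ℝ) := by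
    rw [Nat.cast_sub hrk.le]
  have hkr1 : (1 : ℝ) ≤ ((k - r : ℕ) : ℝ) := by exact_mod_cast hs
  have hA : ((r : ℝ) + 1) ^ n ≤ (((k : ℝ) + 1) / 2) ^ (2 * n) := by
    rw [pow_mul]
    apply pow_le_pow_left₀ (by positivity)
    have hk : (r : ℝ) + 1 ≤ (k : ℝ) := by exact_mod_cast hrk
    nlinarith [hk]
  have hB : (n : ℝ) ^ M ≤ (n : ℝ) ^ ((n : ℝ) * (1 - 1 / ((k : ℝ) - r))) := by
    rw [← Real.rpow_natCast (n : ℝ) M]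
    apply Real.rpow_le_rpow_of_exponent_le (by exact_mod_cast hn)
    have h1 : (M : ℝ) ≤ (((k - r - 1) * n : ℕ) : ℝ) / ((k - r : ℕ) : ℝ) :=
      Nat.cast_div_le
    have h2 : (((k - r - 1) * n : ℕ) : ℝ) = (((k - r : ℕ) : ℝ) - 1) * n := by
      push_cast [Nat.cast_sub hs]
      ring
    rw [h2] at h1
    apply h1.trans
    rw [hkr]
    have hne : ((k - r : ℕ) : ℝ) ≠ 0 := by positivity
    field_simp
    ring_nf
    nlinarith [hkr1, Nat.cast_nonneg (α := ℝ) n]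
  calc (Nat.card {σ : Finpartition (Finset.Icc 1 n) //
        (σ.parts.filter fun B => k - r + 1 ≤ B.card).card ≤ r - 1} : ℝ)
      ≤ (((r + 1) ^ n * n ^ M : ℕ) : ℝ) := by exact_mod_cast hcard
    _ = ((r : ℝ) + 1) ^ n * (n : ℝ) ^ M := by push_cast; ring
    _ ≤ (((k : ℝ) + 1) / 2) ^ (2 * n) * (n : ℝ) ^ ((n : ℝ) * (1 - 1 / ((k : ℝ) - r))) := by
        apply mul_le_mul hA hB (by positivity) (by positivity)
end

section
/- Fix an integer k ≥ 2 and let L_k = 12⋯k be the set partition of [k] consisting of a single block. Then for every positive integer n, A_n(L_k) ≤ k^n · n^(n(1 - 1/(k-1))). -/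
variable {n : ℕ}

/-- minimum of the block of `a`, totalized. -/
noncomputable def mOf (σ : Finpartition (Finset.Icc 1 n)) (a : ℕ) : ℕ :=
  (σ.part a ∪ {a}).min' ⟨a, by simp⟩

lemma mOf_eq (σ : Finpartition (Finset.Icc 1 n)) {a : ℕ} (ha : a ∈ Finset.Icc 1 n) :
    mOf σ a ∈ σ.part a ∧ ∀ x ∈ σ.part a, mOf σ a ≤ x := by
  have h1 : σ.part a ∪ {a} = σ.part a := by
    rw [Finset.union_eq_left]
    simpa using σ.mem_part ha
  unfold mOf
  constructor
  · have := Finset.min'_mem (σ.part a ∪ {a}) ⟨a, by simp⟩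
    rw [Finset.mem_union] at this
    rcases this with h | h
    · exact h
    · simp only [Finset.mem_singleton] at h
      rw [h]; exact σ.mem_part ha
  · intro x hx
    exact Finset.min'_le _ _ (by rw [h1]; exact hx)

lemma mOf_mem_Icc (σ : Finpartition (Finset.Icc 1 n)) {a : ℕ} (ha : a ∈ Finset.Icc 1 n) :
    mOf σ a ∈ Finset.Icc 1 n :=
  σ.le (σ.part_mem.2 ha) (mOf_eq σ ha).1

lemma part_eq_iff_mOf_eq (σ : Finpartition (Finset.Icc 1 n)) {a b : ℕ}
    (ha : a ∈ Finset.Icc 1 n) (hb : b ∈ Finset.Icc 1 n) :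
    σ.part a = σ.part b ↔ mOf σ a = mOf σ b := by
  constructor
  · intro h
    have h1 := mOf_eq σ ha
    have h2 := mOf_eq σ hb
    exact le_antisymm (h1.2 _ (h ▸ h2.1)) (h2.2 _ (h ▸ h1.1))
  · intro h
    exact σ.eq_of_mem_parts (σ.part_mem.2 ha) (σ.part_mem.2 hb) (mOf_eq σ ha).1 (h ▸ (mOf_eq σ hb).1)

/-- the encoding of a partition as a function on `Fin n`. -/
noncomputable def enc (σ : Finpartition (Finset.Icc 1 n)) (i : Fin n) : Fin n :=
  ⟨mOf σ ((i : ℕ) + 1) - 1, by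
    have hi : (i : ℕ) + 1 ∈ Finset.Icc 1 n := by
      simp [Nat.succ_le_of_lt i.isLt]
    have := mOf_mem_Icc σ hi
    simp only [Finset.mem_Icc] at this
    omega⟩

lemma enc_eq_iff (σ : Finpartition (Finset.Icc 1 n)) {a b : ℕ}
    (ha : a ∈ Finset.Icc 1 n) (hb : b ∈ Finset.Icc 1 n) :
    enc σ ⟨a - 1, by simp at ha; omega⟩ = enc σ ⟨b - 1, by simp at hb; omega⟩ ↔
      σ.part a = σ.part b := by
  simp only [Finset.mem_Icc] at ha hb
  have hA : a - 1 + 1 = a := by omega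
  have hB : b - 1 + 1 = b := by omega
  have h1 := mOf_mem_Icc σ (show a ∈ Finset.Icc 1 n by simp; omega)
  have h2 := mOf_mem_Icc σ (show b ∈ Finset.Icc 1 n by simp; omega)
  simp only [Finset.mem_Icc] at h1 h2
  rw [part_eq_iff_mOf_eq σ (by simp; omega) (by simp; omega)]
  simp only [enc, Fin.mk.injEq, hA, hB]
  omega

lemma enc_injective : Function.Injective (enc (n := n)) := by
  intro σ σ' h
  have key : ∀ a ∈ Finset.Icc 1 n, σ.part a = σ'.part a := by
    intro a ha
    ext b
    constructor
    · intro hbmem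
      have hb : b ∈ Finset.Icc 1 n := σ.le (σ.part_mem.2 ha) hbmem
      have : σ.part b = σ.part a := (σ.mem_part_iff_part_eq_part hb ha).1 hbmem
      have h2 : σ'.part b = σ'.part a := by
        rw [← enc_eq_iff σ' hb ha, ← h, enc_eq_iff σ hb ha]
        exact this
      exact (σ'.mem_part_iff_part_eq_part hb ha).2 h2 
    · intro hbmem
      have hb : b ∈ Finset.Icc 1 n := σ'.le (σ'.part_mem.2 ha) hbmem
      have : σ'.part b = σ'.part a := (σ'.mem_part_iff_part_eq_part hb ha).1 hbmem
      have h2 : σ.part b = σ.part a := by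
        rw [← enc_eq_iff σ hb ha, h, enc_eq_iff σ' hb ha]
        exact this
      exact (σ.mem_part_iff_part_eq_part hb ha).2 h2
  ext B
  constructor
  · intro hB
    obtain ⟨a, haB⟩ := Finpartition.nonempty_of_mem_parts _ hB
    have ha : a ∈ Finset.Icc 1 n := σ.le hB haB
    have : B = σ.part a := (σ.part_eq_of_mem hB haB).symm
    rw [this, key a ha]
    exact σ'.part_mem.2 ha
  · intro hB
    obtain ⟨a, haB⟩ := Finpartition.nonempty_of_mem_parts _ hB
    have ha : a ∈ Finset.Icc 1 n := σ'.le hB haB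
    have : B = σ'.part a := (σ'.part_eq_of_mem hB haB).symm
    rw [this, ← key a ha]
    exact σ.part_mem.2 ha

/-- number of fixed points of `enc σ` is at least the number of parts. -/
lemma parts_card_le_fixed (hn : 0 < n) (σ : Finpartition (Finset.Icc 1 n)) :
    σ.parts.card ≤ (Finset.univ.filter (fun i => enc σ i = i)).card := by
  classical
  have hval : ∀ B, ∀ hB : B ∈ σ.parts, (B ∪ {n}).min' ⟨n, by simp⟩ =
      B.min' (Finpartition.nonempty_of_mem_parts _ hB) := by
    intro B hB
    have hne := Finpartition.nonempty_of_mem_parts _ hB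
    have hle : B.min' hne ≤ n := by
      have := σ.le hB (Finset.min'_mem B hne)
      simp only [Finset.mem_Icc] at this; omega
    apply le_antisymm
    · exact Finset.min'_le _ _ (Finset.mem_union_left _ (Finset.min'_mem B hne))
    · have := Finset.min'_mem (B ∪ {n}) ⟨n, by simp⟩
      rw [Finset.mem_union] at this
      rcases this with h | h
      · exact Finset.min'_le _ _ h
      · simp only [Finset.mem_singleton] at h
        rw [h]; exact hle
  apply Finset.card_le_card_of_injOn
    (fun B => (⟨(B ∪ {n}).min' ⟨n, by simp⟩ - 1, by
      have : (B ∪ {n}).min' ⟨n, by simp⟩ ≤ n :=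
        Finset.min'_le _ _ (by simp)
      omega⟩ : Fin n))
  · intro B hB
    simp only [Finset.mem_coe, Finset.mem_filter, Finset.mem_univ, true_and]
    have hne := Finpartition.nonempty_of_mem_parts _ hB
    set a := B.min' hne with hadef
    have haB : a ∈ B := Finset.min'_mem B hne
    have ha : a ∈ Finset.Icc 1 n := σ.le hB haB
    simp only [Finset.mem_Icc] at ha
    have hA : a - 1 + 1 = a := by omega
    apply Fin.ext
    simp only [enc, hval B hB, ← hadef, hA]
    have hpart : σ.part a = B := σ.part_eq_of_mem hB haB
    have h1 := mOf_eq σ (show a ∈ Finset.Icc 1 n by simp; omega)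
    rw [hpart] at h1
    have : mOf σ a = a := le_antisymm (h1.2 a haB) (Finset.min'_le B _ h1.1)
    simp [this]
  · intro B hB C hC hBC
    simp only [Finset.mem_coe] at hB hC
    simp only [Fin.mk.injEq, hval B hB, hval C hC] at hBC
    have h1 := σ.le hB (Finset.min'_mem B (Finpartition.nonempty_of_mem_parts _ hB))
    have h2 := σ.le hC (Finset.min'_mem C (Finpartition.nonempty_of_mem_parts _ hC))
    simp only [Finset.mem_Icc] at h1 h2
    have heq : B.min' (Finpartition.nonempty_of_mem_parts _ hB)
        = C.min' (Finpartition.nonempty_of_mem_parts _ hC) := by omega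
    exact σ.eq_of_mem_parts hB hC (Finset.min'_mem B _) (heq ▸ Finset.min'_mem C _)


/-- If σ avoids the single-block partition of [k], every block has size ≤ k-1. -/
lemma blocks_small {n k : ℕ} (hk : 2 ≤ k) (τ : Finpartition (Finset.Icc 1 k))
    (hτ : τ.parts = {Finset.Icc 1 k}) (σ : Finpartition (Finset.Icc 1 n))
    (hσ : ¬ SetPartContains σ τ) : ∀ B ∈ σ.parts, B.card ≤ k - 1 := by
  intro B hB
  by_contra hcard
  push_neg at hcard
  have hkB : k ≤ B.card := by omega
  obtain ⟨B', hB'sub, hB'card⟩ := Finset.exists_subset_card_eq hkB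
  apply hσ
  classical
  set e := B'.orderIsoOfFin hB'card with he
  refine ⟨fun i => if h : i - 1 < k then (e ⟨i - 1, h⟩ : ℕ) else 0, ?_, ?_, ?_⟩
  · intro i hi
    simp only [Finset.mem_Icc] at hi
    have h : i - 1 < k := by omega
    simp only [h, dif_pos]
    exact σ.le hB (hB'sub (e ⟨i - 1, h⟩).2)
  · intro i hi j hj hij
    simp only [Finset.mem_Icc] at hi hj
    have h1 : i - 1 < k := by omega
    have h2 : j - 1 < k := by omega
    simp only [h1, h2, dif_pos]
    have : (⟨i - 1, h1⟩ : Fin k) < ⟨j - 1, h2⟩ := by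
      simp only [Fin.mk_lt_mk]; omega
    exact Subtype.coe_lt_coe.2 (e.strictMono this)
  · intro i hi j hj
    have hik := hi; have hjk := hj
    simp only [Finset.mem_Icc] at hik hjk
    have h1 : i - 1 < k := by omega
    have h2 : j - 1 < k := by omega
    apply iff_of_true
    · exact ⟨Finset.Icc 1 k, by rw [hτ]; simp, hi, hj⟩
    · simp only [h1, h2, dif_pos]
      exact ⟨B, hB, hB'sub (e ⟨i - 1, h1⟩).2, hB'sub (e ⟨j - 1, h2⟩).2⟩

lemma n_le_parts_mul {n k : ℕ} (hk : 2 ≤ k) (σ : Finpartition (Finset.Icc 1 n))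
    (hsmall : ∀ B ∈ σ.parts, B.card ≤ k - 1) : n ≤ σ.parts.card * (k - 1) := by
  have h1 : ∑ B ∈ σ.parts, B.card = n := by
    rw [σ.sum_card_parts, Nat.card_Icc]; omega
  calc n = ∑ B ∈ σ.parts, B.card := h1.symm
    _ ≤ ∑ _B ∈ σ.parts, (k - 1) := Finset.sum_le_sum hsmall
    _ = σ.parts.card * (k - 1) := by rw [Finset.sum_const, smul_eq_mul]


open Finset in
lemma piece_card {n : ℕ} (T : Finset (Fin n)) :
    (Finset.univ.filter (fun f : Fin n → Fin n => ∀ i ∈ T, f i = i)).card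
      ≤ n ^ (n - T.card) := by
  classical
  have := Finset.card_le_card_of_injOn
    (s := Finset.univ.filter (fun f : Fin n → Fin n => ∀ i ∈ T, f i = i))
    (t := (Finset.univ : Finset ({x // x ∈ (Tᶜ : Finset (Fin n))} → Fin n)))
    (fun f => fun x : {x // x ∈ (Tᶜ : Finset (Fin n))} => f x)
    (fun f _ => Finset.mem_univ _)
    (by
      intro f hf g hg hfg
      simp only [Finset.mem_coe, Finset.mem_filter] at hf hg
      funext i
      by_cases hi : i ∈ T
      · rw [hf.2 i hi, hg.2 i hi]
      · exact congrFun hfg ⟨i, Finset.mem_compl.2 hi⟩)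
  rwa [Finset.card_univ, Fintype.card_fun, Fintype.card_coe, Fintype.card_fin,
    Finset.card_compl, Fintype.card_fin] at this

open Finset in
lemma count_bound {n k : ℕ} (hn : 0 < n) (hk : 2 ≤ k) :
    (((Finset.univ : Finset (Fin n → Fin n)).filter
        (fun f => n ≤ (Finset.univ.filter (fun i => f i = i)).card * (k - 1))).card : ℝ)
      ≤ 2 ^ n * (n : ℝ) ^ ((n : ℝ) - (n : ℝ) / ((k : ℝ) - 1)) := by
  classical
  set S : Finset (Finset (Fin n)) :=
    Finset.univ.filter (fun T => n ≤ T.card * (k - 1)) with hS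
  set D := (Finset.univ : Finset (Fin n → Fin n)).filter
    (fun f => n ≤ (Finset.univ.filter (fun i => f i = i)).card * (k - 1)) with hD
  have hsub : D ⊆ S.biUnion (fun T => Finset.univ.filter (fun f => ∀ i ∈ T, f i = i)) := by
    intro f hf
    simp only [hD, Finset.mem_filter, Finset.mem_univ, true_and] at hf
    rw [Finset.mem_biUnion]
    exact ⟨Finset.univ.filter (fun i => f i = i),
      by simp only [hS, Finset.mem_filter, Finset.mem_univ, true_and]; exact hf,
      by simp only [Finset.mem_filter, Finset.mem_univ, true_and]
         intro i hi; exact hi⟩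
  have h1 : D.card ≤ ∑ T ∈ S, n ^ (n - T.card) :=
    le_trans (Finset.card_le_card hsub)
      (le_trans (Finset.card_biUnion_le) (Finset.sum_le_sum fun T _ => piece_card T))
  have h2 : (D.card : ℝ) ≤ ∑ T ∈ S, (n : ℝ) ^ ((n : ℝ) - (n : ℝ) / ((k : ℝ) - 1)) := by
    calc (D.card : ℝ) ≤ (∑ T ∈ S, n ^ (n - T.card) : ℕ) := by exact_mod_cast h1
      _ = ∑ T ∈ S, ((n : ℝ) ^ (n - T.card : ℕ)) := by push_cast; ring
      _ ≤ ∑ T ∈ S, (n : ℝ) ^ ((n : ℝ) - (n : ℝ) / ((k : ℝ) - 1)) := by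
          apply Finset.sum_le_sum
          intro T hT
          simp only [hS, Finset.mem_filter, Finset.mem_univ, true_and] at hT
          rw [← Real.rpow_natCast (n : ℝ) (n - T.card)]
          apply Real.rpow_le_rpow_of_exponent_le (by exact_mod_cast hn)
          have hkR : (0 : ℝ) < (k : ℝ) - 1 := by
            have : (2 : ℝ) ≤ (k : ℝ) := by exact_mod_cast hk
            linarith
          have hTn : T.card ≤ n := by
            simpa using Finset.card_le_card (Finset.subset_univ T)
          have hcast : ((n - T.card : ℕ) : ℝ) = (n : ℝ) - (T.card : ℝ) := by
            push_cast [Nat.cast_sub hTn]; ring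
          rw [hcast]
          have : (n : ℝ) / ((k : ℝ) - 1) ≤ (T.card : ℝ) := by
            rw [div_le_iff₀ hkR]
            have : (n : ℝ) ≤ (T.card : ℝ) * ((k - 1 : ℕ) : ℝ) := by exact_mod_cast hT
            rwa [Nat.cast_sub (by omega), Nat.cast_one] at this
          linarith
  calc (D.card : ℝ) ≤ ∑ T ∈ S, (n : ℝ) ^ ((n : ℝ) - (n : ℝ) / ((k : ℝ) - 1)) := h2
    _ = S.card * (n : ℝ) ^ ((n : ℝ) - (n : ℝ) / ((k : ℝ) - 1)) := by
        rw [Finset.sum_const, nsmul_eq_mul]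
    _ ≤ 2 ^ n * (n : ℝ) ^ ((n : ℝ) - (n : ℝ) / ((k : ℝ) - 1)) := by
        apply mul_le_mul_of_nonneg_right
        · have : S.card ≤ 2 ^ n := by
            calc S.card ≤ (Finset.univ : Finset (Finset (Fin n))).card :=
                  Finset.card_le_card (Finset.filter_subset _ _)
              _ = 2 ^ n := by simp
          exact_mod_cast this
        · positivity

/-- For the single-block partition `L_k = 12⋯k` with `k ≥ 2`, for all `n ≥ 1`,
`A_n(L_k) ≤ k^n · n^(n(1 - 1/(k-1)))`. -/
theorem block_upper_bound (k : ℕ) (hk : 2 ≤ k) (τ : Finpartition (Finset.Icc 1 k))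
    (hτ : τ.parts = {Finset.Icc 1 k}) (n : ℕ) (hn : 0 < n) :
    (A n τ : ℝ) ≤ (k : ℝ) ^ n * (n : ℝ) ^ ((n : ℝ) * (1 - 1 / ((k : ℝ) - 1))) := by
  classical
  set D := (Finset.univ : Finset (Fin n → Fin n)).filter
    (fun f => n ≤ (Finset.univ.filter (fun i => f i = i)).card * (k - 1)) with hD
  have hAle : A n τ ≤ D.card := by
    have hΦ : ∀ σ : {σ : Finpartition (Finset.Icc 1 n) // ¬ SetPartContains σ τ},
        enc σ.1 ∈ D := by
      intro ⟨σ, hσ⟩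
      simp only [hD, Finset.mem_filter, Finset.mem_univ, true_and]
      calc n ≤ σ.parts.card * (k - 1) :=
            n_le_parts_mul hk σ (blocks_small hk τ hτ σ hσ)
        _ ≤ (Finset.univ.filter (fun i => enc σ i = i)).card * (k - 1) :=
            Nat.mul_le_mul_right _ (parts_card_le_fixed hn σ)
    have hinj : Function.Injective
        (fun σ : {σ : Finpartition (Finset.Icc 1 n) // ¬ SetPartContains σ τ} =>
          (⟨enc σ.1, hΦ σ⟩ : {f // f ∈ D})) := by
      intro σ σ' h
      exact Subtype.ext (enc_injective (congrArg Subtype.val h))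
    calc A n τ ≤ Nat.card {f // f ∈ D} := Nat.card_le_card_of_injective _ hinj
      _ = D.card := Nat.card_eq_finsetCard D
  have h2 : (D.card : ℝ) ≤ 2 ^ n * (n : ℝ) ^ ((n : ℝ) - (n : ℝ) / ((k : ℝ) - 1)) :=
    count_bound hn hk
  have hexp : (n : ℝ) * (1 - 1 / ((k : ℝ) - 1)) = (n : ℝ) - (n : ℝ) / ((k : ℝ) - 1) := by
    ring
  rw [hexp]
  calc (A n τ : ℝ) ≤ (D.card : ℝ) := by exact_mod_cast hAle
    _ ≤ 2 ^ n * (n : ℝ) ^ ((n : ℝ) - (n : ℝ) / ((k : ℝ) - 1)) := h2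
    _ ≤ (k : ℝ) ^ n * (n : ℝ) ^ ((n : ℝ) - (n : ℝ) / ((k : ℝ) - 1)) := by
        apply mul_le_mul_of_nonneg_right
        · exact pow_le_pow_left₀ (by norm_num) (by exact_mod_cast hk) n
        · positivity
end

section
/- Let k and r be positive integers with r < k, and let a_1, …, a_r be positive integers with a_1 + ⋯ + a_r = k. Then for every positive integer n, A_n(L_{a_1,…,a_r}) ≤ ((k+1)/2)^(2n) · n^(n(1 - 1/(k-r))). -/
namespace LayeredUB
open Finset

lemma sup_id_mem {S : Finset ℕ} (h : S.Nonempty) : S.sup id ∈ S := by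
  have := S.max'_mem h
  rwa [Finset.max'_eq_sup', Finset.sup'_eq_sup] at this

lemma greedy : ∀ (r : ℕ) (a : ℕ → ℕ) (m₀ : ℕ) (𝒞 : Finset (Finset ℕ)),
    (∀ i < r, 0 < a i) → 𝒞.card = r →
    (∀ C ∈ 𝒞, ∀ D ∈ 𝒞, C ≠ D → Disjoint C D) →
    (∀ C ∈ 𝒞, (∑ i ∈ Finset.range r, a i) + 1 ≤ (C.filter (fun x => m₀ < x)).card + r) →
    ∃ Cb S : ℕ → Finset ℕ,
      (∀ j < r, Cb j ∈ 𝒞) ∧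
      (∀ j < r, ∀ j' < r, j ≠ j' → Cb j ≠ Cb j') ∧
      (∀ j < r, S j ⊆ Cb j ∧ (S j).card = a j ∧ ∀ x ∈ S j, m₀ < x) ∧
      (∀ j j', j < j' → j' < r → ∀ x ∈ S j, ∀ y ∈ S j', x < y) := by
  intro r
  induction r with
  | zero =>
    intro a m₀ 𝒞 _ _ _ _
    exact ⟨fun _ => ∅, fun _ => ∅, by omega, by omega, by omega, by omega⟩
  | succ r ih =>
    intro a m₀ 𝒞 hpos hcard hdisj hsize
    have ht : 0 < a 0 := hpos 0 (Nat.succ_pos r)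
    have hsumdec : ∑ i ∈ Finset.range (r+1), a i = (∑ i ∈ Finset.range r, a (i+1)) + a 0 :=
      Finset.sum_range_succ' a r
    have htail : r ≤ ∑ i ∈ Finset.range r, a (i+1) := by
      calc r = ∑ _i ∈ Finset.range r, 1 := by simp
      _ ≤ ∑ i ∈ Finset.range r, a (i+1) :=
        Finset.sum_le_sum (fun i hi => hpos (i+1) (by
          simp only [Finset.mem_range] at hi; omega))
    have hfilt : ∀ C ∈ 𝒞, a 0 ≤ (C.filter (fun x => m₀ < x)).card := by
      intro C hC
      have := hsize C hC
      omega
    have h𝒞ne : 𝒞.Nonempty := Finset.card_pos.1 (by omega)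
    set 𝒮 : Finset (Finset ℕ) :=
      𝒞.biUnion (fun C => Finset.powersetCard (a 0) (C.filter (fun x => m₀ < x))) with h𝒮
    have h𝒮ne : 𝒮.Nonempty := by
      obtain ⟨C₀, hC₀⟩ := h𝒞ne
      obtain ⟨S, hS, hScard⟩ := Finset.exists_subset_card_eq (hfilt C₀ hC₀)
      exact ⟨S, Finset.mem_biUnion.2 ⟨C₀, hC₀, Finset.mem_powersetCard.2 ⟨hS, hScard⟩⟩⟩
    obtain ⟨S₀, hS₀𝒮, hminS₀⟩ := Finset.exists_min_image 𝒮 (fun S => S.sup id) h𝒮ne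
    obtain ⟨Cs, hCs, hS₀p⟩ := Finset.mem_biUnion.1 hS₀𝒮
    rw [Finset.mem_powersetCard] at hS₀p
    obtain ⟨hS₀sub, hS₀card⟩ := hS₀p
    have hS₀ne : S₀.Nonempty := Finset.card_pos.1 (by omega)
    set Mx := S₀.sup id with hMxdef
    have hMxS₀ : Mx ∈ S₀ := sup_id_mem hS₀ne
    have hMxf := Finset.mem_filter.1 (hS₀sub hMxS₀)
    have hMxCs : Mx ∈ Cs := hMxf.1
    have hm₀Mx : m₀ < Mx := hMxf.2
    have hle : ∀ x ∈ S₀, x ≤ Mx := fun x hx => Finset.le_sup (f := id) hx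
    have key : ∀ C ∈ 𝒞, C ≠ Cs →
        (∑ i ∈ Finset.range r, a (i+1)) + 1 ≤ (C.filter (fun x => Mx < x)).card + r := by
      intro C hC hne
      have hLlt : ((C.filter (fun x => m₀ < x)).filter (fun x => x ≤ Mx)).card < a 0 := by
        by_contra h
        push_neg at h
        obtain ⟨S', hS'sub, hS'card⟩ := Finset.exists_subset_card_eq h
        have hS'𝒮 : S' ∈ 𝒮 := Finset.mem_biUnion.2
          ⟨C, hC, Finset.mem_powersetCard.2 ⟨hS'sub.trans (Finset.filter_subset _ _), hS'card⟩⟩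
        have h1 : Mx ≤ S'.sup id := hminS₀ S' hS'𝒮
        have hS'ne : S'.Nonempty := Finset.card_pos.1 (by omega)
        have h2 : S'.sup id ∈ S' := sup_id_mem hS'ne
        have h3 : S'.sup id ≤ Mx := (Finset.mem_filter.1 (hS'sub h2)).2
        have h4 : S'.sup id ∈ C :=
          (Finset.mem_filter.1 ((Finset.filter_subset _ _) (hS'sub h2))).1
        have h5 : S'.sup id = Mx := le_antisymm h3 h1
        exact (Finset.disjoint_left.1 (hdisj C hC Cs hCs hne)) (h5 ▸ h4) hMxCs
      have hsplit := Finset.card_filter_add_card_filter_not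
        (s := C.filter (fun x => m₀ < x)) (p := fun x => x ≤ Mx)
      have hsub2 : (C.filter (fun x => m₀ < x)).filter (fun x => ¬ x ≤ Mx)
          = C.filter (fun x => Mx < x) := by
        ext x
        simp only [Finset.mem_filter, not_le]
        constructor
        · rintro ⟨⟨h1, _⟩, h3⟩; exact ⟨h1, h3⟩
        · rintro ⟨h1, h3⟩; exact ⟨⟨h1, lt_trans hm₀Mx h3⟩, h3⟩
      rw [hsub2] at hsplit
      have := hsize C hC
      omega
    obtain ⟨Cb', S', h1', h2', h3', h4'⟩ := ih (fun i => a (i+1)) Mx (𝒞.erase Cs)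
      (fun i hi => hpos (i+1) (by omega))
      (by rw [Finset.card_erase_of_mem hCs, hcard]; rfl)
      (fun C hC D hD hne => hdisj C (Finset.erase_subset _ _ hC) D (Finset.erase_subset _ _ hD) hne)
      (fun C hC => key C (Finset.erase_subset _ _ hC) (Finset.ne_of_mem_erase hC))
    refine ⟨fun j => match j with | 0 => Cs | j+1 => Cb' j,
           fun j => match j with | 0 => S₀ | j+1 => S' j, ?_, ?_, ?_, ?_⟩
    · intro j hj
      match j with
      | 0 => exact hCs
      | j+1 => exact Finset.erase_subset _ _ (h1' j (by omega))
    · intro j hj j' hj' hne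
      match j, j' with
      | 0, 0 => exact absurd rfl hne
      | 0, j'+1 => exact (Finset.ne_of_mem_erase (h1' j' (by omega))).symm
      | j+1, 0 => exact Finset.ne_of_mem_erase (h1' j (by omega))
      | j+1, j'+1 => exact h2' j (by omega) j' (by omega) (by omega)
    · intro j hj
      match j with
      | 0 =>
        exact ⟨hS₀sub.trans (Finset.filter_subset _ _), hS₀card,
          fun x hx => (Finset.mem_filter.1 (hS₀sub hx)).2⟩
      | j+1 =>
        obtain ⟨hs1, hs2, hs3⟩ := h3' j (by omega)
        exact ⟨hs1, hs2, fun x hx => lt_trans hm₀Mx (hs3 x hx)⟩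
    · intro j j' hjj' hj' x hx y hy
      match j, j' with
      | 0, j'+1 =>
        exact lt_of_le_of_lt (hle x hx) ((h3' j' (by omega)).2.2 y hy)
      | j+1, j'+1 =>
        exact h4' j j' (by omega) (by omega) x hx y hy


/-- prefix sums -/
def pref (a : ℕ → ℕ) (j : ℕ) : ℕ := ∑ i ∈ Finset.range j, a i

lemma pref_mono (a : ℕ → ℕ) : Monotone (pref a) := fun _ _ h =>
  Finset.sum_le_sum_of_subset (Finset.range_subset_range.2 h)

lemma pref_succ (a : ℕ → ℕ) (j : ℕ) : pref a (j+1) = pref a j + a j :=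
  Finset.sum_range_succ a j

open Classical in
/-- the layer of `i` -/
noncomputable def layerFn (a : ℕ → ℕ) (i : ℕ) : ℕ :=
  if h : ∃ j, i ≤ pref a (j+1) then Nat.find h else 0

lemma layer_le_of_le {a : ℕ → ℕ} {i j : ℕ} (h : i ≤ pref a (j+1)) : layerFn a i ≤ j := by
  unfold layerFn
  rw [dif_pos ⟨j, h⟩]
  exact Nat.find_min' _ h

lemma layer_spec {a : ℕ → ℕ} {i j : ℕ} (h1 : 1 ≤ i) (h : i ≤ pref a (j+1)) :
    pref a (layerFn a i) < i ∧ i ≤ pref a (layerFn a i + 1) := by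
  unfold layerFn
  rw [dif_pos ⟨j, h⟩]
  constructor
  · rcases Nat.eq_zero_or_pos (Nat.find (⟨j, h⟩ : ∃ j, i ≤ pref a (j+1))) with h0 | h0
    · rw [h0]; simpa [pref] using Nat.lt_of_succ_le h1
    · obtain ⟨j', hj'⟩ := Nat.exists_eq_add_of_lt h0
      rw [hj']
      simp only [Nat.zero_add] at hj' ⊢
      have := Nat.find_min (⟨j, h⟩ : ∃ j, i ≤ pref a (j+1)) (m := j') (by omega)
      omega
  · exact Nat.find_spec (⟨j, h⟩ : ∃ j, i ≤ pref a (j+1))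

lemma layer_eq {a : ℕ → ℕ} {i j : ℕ} (hji : pref a j < i) (hij : i ≤ pref a (j+1)) :
    layerFn a i = j := by
  have h1 : layerFn a i ≤ j := layer_le_of_le hij
  rcases lt_or_eq_of_le h1 with h2 | h2
  · exfalso
    have h3 : 1 ≤ i := by
      have : pref a j ≥ 0 := Nat.zero_le _
      omega
    have h4 := (layer_spec h3 hij).2
    have : pref a (layerFn a i + 1) ≤ pref a j := pref_mono a (by omega)
    omega
  · exact h2

section Layer
variable {k r n : ℕ} {a : ℕ → ℕ}

lemma layer_lt (hr : 0 < r) (hsum : pref a r = k) {i : ℕ} (h1 : 1 ≤ i) (h2 : i ≤ k) :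
    layerFn a i < r := by
  have : i ≤ pref a ((r-1)+1) := by
    rw [show r - 1 + 1 = r by omega, hsum]; exact h2
  have := layer_le_of_le this
  omega

lemma sameBlock_layered (hr : 0 < r) (hsum : pref a r = k)
    {τ : Finpartition (Finset.Icc 1 k)} (hτ : IsLayered r a τ)
    {i j : ℕ} (hi : i ∈ Finset.Icc 1 k) (hj : j ∈ Finset.Icc 1 k) :
    SameBlock τ i j ↔ layerFn a i = layerFn a j := by
  rw [Finset.mem_Icc] at hi hj
  constructor
  · rintro ⟨B, hB, hiB, hjB⟩
    rw [hτ] at hB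
    obtain ⟨l, hl, rfl⟩ := Finset.mem_image.1 hB
    rw [Finset.mem_range] at hl
    rw [Finset.mem_Icc] at hiB hjB
    have e1 : layerFn a i = l := layer_eq (by exact hiB.1) hiB.2
    have e2 : layerFn a j = l := layer_eq (by exact hjB.1) hjB.2
    rw [e1, e2]
  · intro h
    have hil := layer_spec hi.1 (j := r - 1)
      (by rw [show r - 1 + 1 = r by omega, hsum]; exact hi.2)
    have hjl := layer_spec hj.1 (j := r - 1)
      (by rw [show r - 1 + 1 = r by omega, hsum]; exact hj.2)
    refine ⟨Finset.Icc (pref a (layerFn a i) + 1) (pref a (layerFn a i + 1)), ?_, ?_, ?_⟩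
    · rw [hτ]
      exact Finset.mem_image.2 ⟨layerFn a i,
        Finset.mem_range.2 (layer_lt hr hsum hi.1 hi.2), rfl⟩
    · rw [Finset.mem_Icc]; omega
    · rw [Finset.mem_Icc, h]; omega

end Layer

lemma contains_of_blocks {n k r : ℕ} (a : ℕ → ℕ) (hr : 0 < r) (hrk : r < k)
    (ha : ∀ i < r, 0 < a i) (hsum : ∑ i ∈ Finset.range r, a i = k)
    (τ : Finpartition (Finset.Icc 1 k)) (hτ : IsLayered r a τ)
    (σ : Finpartition (Finset.Icc 1 n))
    (hbig : r ≤ (σ.parts.filter (fun B => k - r < B.card)).card) :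
    SetPartContains σ τ := by
  have hksum : pref a r = k := hsum
  obtain ⟨𝒞, h𝒞sub, h𝒞card⟩ := Finset.exists_subset_card_eq hbig
  have h𝒞P : ∀ C ∈ 𝒞, C ∈ σ.parts ∧ k - r < C.card := fun C hC =>
    Finset.mem_filter.1 (h𝒞sub hC)
  obtain ⟨Cb, S, hCb, hCbne, hS, hcross⟩ := greedy r a 0 𝒞 ha h𝒞card
    (fun C hC D hD hne => σ.disjoint (h𝒞P C hC).1 (h𝒞P D hD).1 hne)
    (by
      intro C hC
      have h1 := h𝒞P C hC
      have h2 : C.filter (fun x => 0 < x) = C := Finset.filter_true_of_mem (fun x hx => by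
        have := σ.le h1.1 hx
        rw [Finset.mem_Icc] at this
        omega)
      rw [h2, hsum]
      omega)
  set f : ℕ → ℕ :=
    fun i => ((S (layerFn a i)).sort (·≤·)).getD (i - pref a (layerFn a i) - 1) 0 with hf
  have hidx : ∀ i ∈ Finset.Icc 1 k,
      i - pref a (layerFn a i) - 1 < ((S (layerFn a i)).sort (·≤·)).length := by
    intro i hi
    rw [Finset.mem_Icc] at hi
    have hl : layerFn a i < r := layer_lt hr hksum hi.1 hi.2
    have hsp := layer_spec hi.1 (j := r-1)
      (by rw [show r - 1 + 1 = r by omega, hksum]; exact hi.2)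
    rw [Finset.length_sort, (hS _ hl).2.1]
    have := pref_succ a (layerFn a i)
    omega
  have hmem : ∀ i ∈ Finset.Icc 1 k, f i ∈ S (layerFn a i) := by
    intro i hi
    show ((S (layerFn a i)).sort (· ≤ ·)).getD (i - pref a (layerFn a i) - 1) 0
      ∈ S (layerFn a i)
    rw [List.getD_eq_getElem _ _ (hidx i hi)]
    exact (Finset.mem_sort _).1 (List.getElem_mem _)
  have hlayerlt : ∀ i ∈ Finset.Icc 1 k, layerFn a i < r := by
    intro i hi; rw [Finset.mem_Icc] at hi; exact layer_lt hr hksum hi.1 hi.2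
  refine ⟨f, ?_, ?_, ?_⟩
  · intro i hi
    have hl := hlayerlt i hi
    exact Finset.mem_of_subset (σ.le (h𝒞P _ (hCb _ hl)).1) ((hS _ hl).1 (hmem i hi))
  · intro i hi j hj hij
    have hi' := hi; have hj' := hj
    rw [Finset.mem_Icc] at hi' hj'
    have hlj := layer_spec hj'.1 (j := r-1)
      (by rw [show r - 1 + 1 = r by omega, hksum]; exact hj'.2)
    have hmono : layerFn a i ≤ layerFn a j :=
      layer_le_of_le (le_trans (le_of_lt hij) hlj.2)
    rcases lt_or_eq_of_le hmono with hlt | heq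
    · exact hcross _ _ hlt (hlayerlt j hj) _ (hmem i hi) _ (hmem j hj)
    · have hli := layer_spec hi'.1 (j := r-1)
        (by rw [show r - 1 + 1 = r by omega, hksum]; exact hi'.2)
      show ((S (layerFn a i)).sort (· ≤ ·)).getD (i - pref a (layerFn a i) - 1) 0
        < ((S (layerFn a j)).sort (· ≤ ·)).getD (j - pref a (layerFn a j) - 1) 0
      simp only [heq]
      have hgi' : i - pref a (layerFn a j) - 1 < ((S (layerFn a j)).sort (·≤·)).length := by
        have := hidx i hi; rwa [heq] at this
      have hgj' : j - pref a (layerFn a j) - 1 < ((S (layerFn a j)).sort (·≤·)).length :=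
        hidx j hj
      rw [List.getD_eq_getElem _ _ hgi', List.getD_eq_getElem _ _ hgj']
      refine (Finset.sortedLT_sort _).getElem_lt_getElem_iff.2 ?_
      rw [heq] at hli
      omega
  · intro i hi j hj
    rw [sameBlock_layered hr hksum hτ hi hj]
    constructor
    · intro h
      refine ⟨Cb (layerFn a i), (h𝒞P _ (hCb _ (hlayerlt i hi))).1,
        (hS _ (hlayerlt i hi)).1 (hmem i hi), ?_⟩
      have := (hS _ (hlayerlt j hj)).1 (hmem j hj)
      rwa [← h] at this
    · rintro ⟨B, hB, hfi, hfj⟩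
      by_contra hne
      have e1 : B = Cb (layerFn a i) := σ.eq_of_mem_parts hB
        ((h𝒞P _ (hCb _ (hlayerlt i hi))).1) hfi ((hS _ (hlayerlt i hi)).1 (hmem i hi))
      have e2 : B = Cb (layerFn a j) := σ.eq_of_mem_parts hB
        ((h𝒞P _ (hCb _ (hlayerlt j hj))).1) hfj ((hS _ (hlayerlt j hj)).1 (hmem j hj))
      exact hCbne _ (hlayerlt i hi) _ (hlayerlt j hj) hne (e1.symm.trans e2)

variable {n : ℕ}

/-- minimum of the part containing `i` -/
def minOf (σ : Finpartition (Finset.Icc 1 n)) (i : ℕ) : ℕ := WithTop.untopD 0 (σ.part i).min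

lemma minOf_mem {σ : Finpartition (Finset.Icc 1 n)} {i : ℕ} (hi : i ∈ Finset.Icc 1 n) :
    minOf σ i ∈ σ.part i := by
  have hne : (σ.part i).Nonempty := σ.nonempty_of_mem_parts (σ.part_mem.2 hi)
  rw [minOf, ← Finset.coe_min' hne, WithTop.untopD_coe]
  exact Finset.min'_mem _ hne

lemma minOf_congr {σ : Finpartition (Finset.Icc 1 n)} {i j : ℕ}
    (h : σ.part i = σ.part j) : minOf σ i = minOf σ j := by
  rw [minOf, minOf, h]

lemma part_mem_Icc {σ : Finpartition (Finset.Icc 1 n)} {i j : ℕ} (hi : i ∈ Finset.Icc 1 n)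
    (hj : j ∈ σ.part i) : j ∈ Finset.Icc 1 n :=
  Finset.mem_of_subset (σ.le (σ.part_mem.2 hi)) hj

lemma part_eq_part {σ : Finpartition (Finset.Icc 1 n)} {i j : ℕ} (hi : i ∈ Finset.Icc 1 n)
    (hj : j ∈ σ.part i) : σ.part j = σ.part i :=
  σ.part_eq_of_mem (σ.part_mem.2 hi) hj

/-- the big parts -/
def bigs (s : ℕ) (σ : Finpartition (Finset.Icc 1 n)) : Finset (Finset ℕ) :=
  σ.parts.filter (fun B => s < B.card)

/-- index of a big part -/
def idxB (s : ℕ) (σ : Finpartition (Finset.Icc 1 n)) (B : Finset ℕ) : ℕ :=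
  ((bigs s σ).filter (fun B' => B'.min < B.min)).card

lemma idxB_lt {s : ℕ} {σ : Finpartition (Finset.Icc 1 n)} {B : Finset ℕ}
    (hB : B ∈ bigs s σ) : idxB s σ B < (bigs s σ).card := by
  have hsub : (bigs s σ).filter (fun B' => B'.min < B.min) ⊆ (bigs s σ).erase B := by
    intro x hx
    rw [Finset.mem_filter] at hx
    refine Finset.mem_erase.2 ⟨?_, hx.1⟩
    intro he
    rw [he] at hx
    exact lt_irrefl _ hx.2
  have h1 := Finset.card_le_card hsub
  have h2 := Finset.card_erase_of_mem hB
  have h3 : 0 < (bigs s σ).card := Finset.card_pos.2 ⟨B, hB⟩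
  rw [idxB]
  omega

lemma idxB_inj {s : ℕ} {σ : Finpartition (Finset.Icc 1 n)} {B B' : Finset ℕ}
    (hB : B ∈ bigs s σ) (hB' : B' ∈ bigs s σ)
    (h : idxB s σ B = idxB s σ B') : B = B' := by
  have key : ∀ C C' : Finset ℕ, C ∈ bigs s σ → C' ∈ bigs s σ → C.min < C'.min →
      idxB s σ C < idxB s σ C' := by
    intro C C' hC hC' hlt
    have hsub : insert C ((bigs s σ).filter (fun B'' => B''.min < C.min)) ⊆
        (bigs s σ).filter (fun B'' => B''.min < C'.min) := by
      intro x hx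
      rcases Finset.mem_insert.1 hx with rfl | hx
      · exact Finset.mem_filter.2 ⟨hC, hlt⟩
      · rw [Finset.mem_filter] at hx
        exact Finset.mem_filter.2 ⟨hx.1, lt_trans hx.2 hlt⟩
    have hni : C ∉ (bigs s σ).filter (fun B'' => B''.min < C.min) := by
      rw [Finset.mem_filter]
      rintro ⟨-, h2⟩
      exact lt_irrefl _ h2
    have := Finset.card_le_card hsub
    rw [Finset.card_insert_of_notMem hni] at this
    rw [idxB, idxB]
    omega
  by_contra hne
  have hBp : B ∈ σ.parts := (Finset.mem_filter.1 hB).1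
  have hB'p : B' ∈ σ.parts := (Finset.mem_filter.1 hB').1
  have hBne : B.Nonempty := σ.nonempty_of_mem_parts hBp
  have hB'ne : B'.Nonempty := σ.nonempty_of_mem_parts hB'p
  have hmne : B.min ≠ B'.min := by
    intro he
    rw [← Finset.coe_min' hBne, ← Finset.coe_min' hB'ne] at he
    have he' : B.min' hBne = B'.min' hB'ne := by exact_mod_cast he
    exact hne (σ.eq_of_mem_parts hBp hB'p (Finset.min'_mem _ _) (he' ▸ Finset.min'_mem _ hB'ne))
  rcases lt_or_gt_of_ne hmne with hlt | hlt
  · exact absurd h (ne_of_lt (key _ _ hB hB' hlt))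
  · exact absurd h.symm (ne_of_lt (key _ _ hB' hB hlt))

/-- encoded label (as a natural number) -/
def lblN (s : ℕ) (σ : Finpartition (Finset.Icc 1 n)) (i : ℕ) : ℕ :=
  if s < (σ.part i).card then idxB s σ (σ.part i) + 1 else 0

lemma lblN_eq_zero_iff {s : ℕ} {σ : Finpartition (Finset.Icc 1 n)} {i : ℕ} :
    lblN s σ i = 0 ↔ (σ.part i).card ≤ s := by
  rw [lblN]
  split <;> omega

lemma lblN_lt {s r : ℕ} {σ : Finpartition (Finset.Icc 1 n)} (hr : 0 < r)
    (hb : (bigs s σ).card ≤ r - 1) (i : ↥(Finset.Icc 1 n)) : lblN s σ ↑i < r := by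
  rw [lblN]
  split
  · rename_i hbig
    have : σ.part ↑i ∈ bigs s σ := Finset.mem_filter.2 ⟨σ.part_mem.2 i.2, hbig⟩
    have := idxB_lt this
    omega
  · omega

/-- reconstruction: a partition is determined by its labels and small-part minima -/
lemma part_subset_of_data {s : ℕ} {σ σ' : Finpartition (Finset.Icc 1 n)}
    (hlbl : ∀ i ∈ Finset.Icc 1 n, lblN s σ i = lblN s σ' i)
    (hmin : ∀ i ∈ Finset.Icc 1 n, (σ.part i).card ≤ s → minOf σ i = minOf σ' i)
    {i : ℕ} (hi : i ∈ Finset.Icc 1 n) : σ.part i ⊆ σ'.part i := by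
  intro j hjmem
  have hj : j ∈ Finset.Icc 1 n := part_mem_Icc hi hjmem
  have hpj : σ.part j = σ.part i := part_eq_part hi hjmem
  by_cases hbig : s < (σ.part i).card
  · have hbj : s < (σ.part j).card := by rw [hpj]; exact hbig
    have hli : lblN s σ i = lblN s σ j := by rw [lblN, lblN, hpj]
    have hl'ij : lblN s σ' i = lblN s σ' j := by
      rw [← hlbl i hi, ← hlbl j hj, hli]
    have hbig'i : s < (σ'.part i).card := by
      by_contra hsm
      push_neg at hsm
      have h0 : lblN s σ' i = 0 := lblN_eq_zero_iff.2 hsm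
      rw [← hlbl i hi, lblN] at h0
      rw [if_pos hbig] at h0
      omega
    have hbig'j : s < (σ'.part j).card := by
      by_contra hsm
      push_neg at hsm
      have h0 : lblN s σ' j = 0 := lblN_eq_zero_iff.2 hsm
      rw [← hl'ij] at h0
      rw [lblN, if_pos hbig'i] at h0
      omega
    have hidx : idxB s σ' (σ'.part i) = idxB s σ' (σ'.part j) := by
      rw [lblN, lblN, if_pos hbig'i, if_pos hbig'j] at hl'ij
      omega
    have hpeq : σ'.part i = σ'.part j := idxB_inj
      (Finset.mem_filter.2 ⟨σ'.part_mem.2 hi, hbig'i⟩)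
      (Finset.mem_filter.2 ⟨σ'.part_mem.2 hj, hbig'j⟩) hidx
    rw [hpeq]
    exact σ'.mem_part hj
  · push_neg at hbig
    have hsmj : (σ.part j).card ≤ s := by rw [hpj]; exact hbig
    have hmm : minOf σ' i = minOf σ' j := by
      rw [← hmin i hi hbig, ← hmin j hj hsmj]
      exact minOf_congr hpj.symm ▸ minOf_congr hpj |>.symm ▸ (minOf_congr hpj).symm
    have m1 : minOf σ' i ∈ σ'.part i := minOf_mem hi
    have m2 : minOf σ' j ∈ σ'.part j := minOf_mem hj
    have hpeq : σ'.part i = σ'.part j :=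
      σ'.eq_of_mem_parts (σ'.part_mem.2 hi) (σ'.part_mem.2 hj) m1 (hmm ▸ m2)
    rw [hpeq]
    exact σ'.mem_part hj

lemma recon {s : ℕ} {σ σ' : Finpartition (Finset.Icc 1 n)}
    (hlbl : ∀ i ∈ Finset.Icc 1 n, lblN s σ i = lblN s σ' i)
    (hmin : ∀ i ∈ Finset.Icc 1 n, (σ.part i).card ≤ s → minOf σ i = minOf σ' i) :
    σ = σ' := by
  have hlbl' : ∀ i ∈ Finset.Icc 1 n, lblN s σ' i = lblN s σ i :=
    fun i hi => (hlbl i hi).symm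
  have hmin' : ∀ i ∈ Finset.Icc 1 n, (σ'.part i).card ≤ s → minOf σ' i = minOf σ i := by
    intro i hi hsm
    have : (σ.part i).card ≤ s := by
      rw [← lblN_eq_zero_iff (σ := σ), hlbl i hi, lblN_eq_zero_iff]
      exact hsm
    exact (hmin i hi this).symm
  have hpart : ∀ i ∈ Finset.Icc 1 n, σ.part i = σ'.part i := fun i hi =>
    Finset.Subset.antisymm (part_subset_of_data hlbl hmin hi)
      (part_subset_of_data hlbl' hmin' hi)
  ext1
  ext B
  constructor
  · intro hB
    obtain ⟨i, hiB⟩ := σ.nonempty_of_mem_parts hB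
    have hi : i ∈ Finset.Icc 1 n := Finset.mem_of_subset (σ.le hB) hiB
    have : B = σ.part i := (σ.part_eq_of_mem hB hiB).symm
    rw [this, hpart i hi]
    exact σ'.part_mem.2 hi
  · intro hB
    obtain ⟨i, hiB⟩ := σ'.nonempty_of_mem_parts hB
    have hi : i ∈ Finset.Icc 1 n := Finset.mem_of_subset (σ'.le hB) hiB
    have : B = σ'.part i := (σ'.part_eq_of_mem hB hiB).symm
    rw [this, ← hpart i hi]
    exact σ.part_mem.2 hi


def SmallSet {n r : ℕ} (ℓ : ↥(Finset.Icc 1 n) → Fin r) : Finset ↥(Finset.Icc 1 n) :=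
  Finset.univ.filter (fun i => (ℓ i : ℕ) = 0)
def Valid (s : ℕ) {n r : ℕ}
    (q : (↥(Finset.Icc 1 n) → Fin r) × Finset ↥(Finset.Icc 1 n)) : Prop :=
  (SmallSet q.1).card ≤ s * q.2.card ∧ q.2 ⊆ SmallSet q.1
instance (s : ℕ) {n r : ℕ} (q : (↥(Finset.Icc 1 n) → Fin r) × Finset ↥(Finset.Icc 1 n)) :
    Decidable (Valid s q) := by unfold Valid; infer_instance
def ESet {n r : ℕ} (q : (↥(Finset.Icc 1 n) → Fin r) × Finset ↥(Finset.Icc 1 n)) :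
    Finset ↥(Finset.Icc 1 n) :=
  Finset.univ.filter (fun i => (q.1 i : ℕ) = 0 ∧ i ∉ q.2)
def TT (s n r : ℕ) :=
  Σ q : {q : (↥(Finset.Icc 1 n) → Fin r) × Finset ↥(Finset.Icc 1 n) // Valid s q},
    (↥(ESet q.1) → ↥(q.1.2))

-- encodings
def encL (s r : ℕ) (σ : Finpartition (Finset.Icc 1 n))
    (hb : ∀ i : ↥(Finset.Icc 1 n), lblN s σ ↑i < r) : ↥(Finset.Icc 1 n) → Fin r :=
  fun i => ⟨lblN s σ ↑i, hb i⟩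

def encM (s : ℕ) (σ : Finpartition (Finset.Icc 1 n)) : Finset ↥(Finset.Icc 1 n) :=
  Finset.univ.filter (fun i => (σ.part ↑i).card ≤ s ∧ (↑i : ℕ) = minOf σ ↑i)

def minI (σ : Finpartition (Finset.Icc 1 n)) (i : ↥(Finset.Icc 1 n)) : ↥(Finset.Icc 1 n) :=
  ⟨minOf σ ↑i, part_mem_Icc i.2 (minOf_mem i.2)⟩

lemma minI_mem_encM {s : ℕ} {σ : Finpartition (Finset.Icc 1 n)} {i : ↥(Finset.Icc 1 n)}
    (hsm : (σ.part ↑i).card ≤ s) : minI σ i ∈ encM s σ := by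
  have hpeq : σ.part (minOf σ ↑i) = σ.part ↑i := part_eq_part i.2 (minOf_mem i.2)
  refine Finset.mem_filter.2 ⟨Finset.mem_univ _, ?_, ?_⟩
  · show (σ.part ((minI σ i : ℕ))).card ≤ s
    rw [show ((minI σ i : ℕ)) = minOf σ ↑i from rfl, hpeq]
    exact hsm
  · show ((minI σ i : ℕ)) = minOf σ ((minI σ i : ℕ))
    rw [show ((minI σ i : ℕ)) = minOf σ ↑i from rfl]
    exact (minOf_congr hpeq).symm

lemma smallSet_encL {s r : ℕ} {σ : Finpartition (Finset.Icc 1 n)}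
    {hb : ∀ i : ↥(Finset.Icc 1 n), lblN s σ ↑i < r} :
    SmallSet (encL s r σ hb) = Finset.univ.filter (fun i : ↥(Finset.Icc 1 n) => (σ.part ↑i).card ≤ s) := by
  unfold SmallSet encL
  ext i
  simp only [Finset.mem_filter, Finset.mem_univ, true_and]
  exact lblN_eq_zero_iff

lemma enc_valid (s r : ℕ) (σ : Finpartition (Finset.Icc 1 n))
    (hb : ∀ i : ↥(Finset.Icc 1 n), lblN s σ ↑i < r) :
    Valid s (encL s r σ hb, encM s σ) := by
  constructor
  · show (SmallSet (encL s r σ hb)).card ≤ s * (encM s σ).card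
    rw [smallSet_encL]
    set Sm : Finset ↥(Finset.Icc 1 n) :=
      Finset.univ.filter (fun i : ↥(Finset.Icc 1 n) => (σ.part ↑i).card ≤ s) with hSm
    have himg : Sm.image (minI σ) ⊆ encM s σ := by
      intro x hx
      obtain ⟨i, hi, rfl⟩ := Finset.mem_image.1 hx
      rw [hSm, Finset.mem_filter] at hi
      exact minI_mem_encM hi.2
    have hcard : Sm.card ≤ s * (Sm.image (minI σ)).card := by
      apply Finset.card_le_mul_card_image
      intro a ha
      obtain ⟨i₀, hi₀, rfl⟩ := Finset.mem_image.1 ha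
      rw [hSm, Finset.mem_filter] at hi₀
      have hpart0 : σ.part ((minI σ i₀ : ℕ)) = σ.part ↑i₀ := part_eq_part i₀.2 (minOf_mem i₀.2)
      have hcardsub : (Sm.filter (fun x => minI σ x = minI σ i₀)).card ≤ (σ.part ↑i₀).card := by
        refine Finset.card_le_card_of_injOn (fun x => (x : ℕ)) ?_ ?_
        · intro x hx
          rw [Finset.mem_coe, Finset.mem_filter, hSm, Finset.mem_filter] at hx
          have hxm : minI σ x = minI σ i₀ := hx.2
          have hv : minOf σ ↑x = minOf σ ↑i₀ := congrArg Subtype.val hxm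
          have hpx : σ.part (minOf σ ↑x) = σ.part ↑x := part_eq_part x.2 (minOf_mem x.2)
          show (x : ℕ) ∈ σ.part ↑i₀
          have hxx : σ.part ↑x = σ.part ↑i₀ := by
            rw [← hpx, hv]; exact hpart0
          rw [← hxx]
          exact σ.mem_part x.2
        · intro x _ y _ hxy
          exact Subtype.ext hxy
      exact le_trans hcardsub hi₀.2
    calc Sm.card ≤ s * (Sm.image (minI σ)).card := hcard
      _ ≤ s * (encM s σ).card := Nat.mul_le_mul_left s (Finset.card_le_card himg)
  · show encM s σ ⊆ SmallSet (encL s r σ hb)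
    rw [smallSet_encL]
    intro x hx
    rw [encM, Finset.mem_filter] at hx
    exact Finset.mem_filter.2 ⟨Finset.mem_univ _, hx.2.1⟩

def Phi (s r : ℕ) (σ : Finpartition (Finset.Icc 1 n))
    (hb : ∀ i : ↥(Finset.Icc 1 n), lblN s σ ↑i < r) : TT s n r :=
  ⟨⟨(encL s r σ hb, encM s σ), enc_valid s r σ hb⟩,
    fun ip => ⟨minI σ ip.1, by
      have h2 := ip.2
      simp only [ESet, Finset.mem_filter] at h2
      have hsm : (σ.part ↑(ip.1)).card ≤ s := by
        have := h2.2.1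
        show _
        rw [show ((encL s r σ hb, encM s σ).1 ip.1 : ℕ) = lblN s σ ↑(ip.1) from rfl] at this
        exact lblN_eq_zero_iff.1 this
      exact minI_mem_encM hsm⟩⟩

def decode {s n r : ℕ} (x : TT s n r) :
    (↥(Finset.Icc 1 n) → Fin r) × (↥(Finset.Icc 1 n) → ℕ) :=
  (x.1.1.1, fun i => if h : i ∈ ESet x.1.1 then ((x.2 ⟨i, h⟩ : ↥(Finset.Icc 1 n)) : ℕ)
    else if i ∈ x.1.1.2 then (i : ℕ) else 0)

lemma decode_Phi (s r : ℕ) (σ : Finpartition (Finset.Icc 1 n))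
    (hb : ∀ i : ↥(Finset.Icc 1 n), lblN s σ ↑i < r) :
    decode (Phi s r σ hb) = (encL s r σ hb,
      fun i : ↥(Finset.Icc 1 n) => if (σ.part ↑i).card ≤ s then minOf σ ↑i else 0) := by
  unfold decode Phi
  refine Prod.ext rfl ?_
  funext i
  simp only
  by_cases h : i ∈ ESet (encL s r σ hb, encM s σ)
  · rw [dif_pos h]
    have h2 := h
    simp only [ESet, Finset.mem_filter] at h2
    have hsm : (σ.part ↑i).card ≤ s := lblN_eq_zero_iff.1 h2.2.1
    rw [if_pos hsm]
    rfl
  · rw [dif_neg h]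
    by_cases hM : i ∈ encM s σ
    · rw [if_pos hM]
      rw [encM, Finset.mem_filter] at hM
      rw [if_pos hM.2.1]
      exact hM.2.2
    · rw [if_neg hM]
      have : ¬ ((encL s r σ hb i : ℕ) = 0 ∧ i ∉ encM s σ) := by
        intro hc
        exact h (by simp only [ESet, Finset.mem_filter]; exact ⟨Finset.mem_univ _, hc⟩)
      push_neg at this
      have hbig : ¬ (σ.part ↑i).card ≤ s := by
        intro hsm
        exact hM (this (by
          show lblN s σ ↑i = 0
          exact lblN_eq_zero_iff.2 hsm))
      rw [if_neg hbig]


noncomputable instance (s n r : ℕ) : Fintype (TT s n r) := by unfold TT; infer_instance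

lemma card_TT (s n r : ℕ) : Fintype.card (TT s n r) =
    ∑ q : {q : (↥(Finset.Icc 1 n) → Fin r) × Finset ↥(Finset.Icc 1 n) // Valid s q},
      (q.1.2.card ^ (ESet q.1).card) := by
  rw [show Fintype.card (TT s n r) = _ from Fintype.card_sigma]
  exact Finset.sum_congr rfl (fun q _ => by
    rw [Fintype.card_fun, Fintype.card_coe, Fintype.card_coe])


end LayeredUB

/-- For a layered partition `L_{a_1,…,a_r}` of `[k]` with `r < k`, for all
`n ≥ 1`, `A_n(L_{a_1,…,a_r}) ≤ ((k+1)/2)^(2n) · n^(n(1 - 1/(k-r)))`. -/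
theorem layered_upper_bound (k r : ℕ) (hr : 0 < r) (hrk : r < k) (a : ℕ → ℕ)
    (ha : ∀ i < r, 0 < a i) (hsum : ∑ i ∈ Finset.range r, a i = k)
    (τ : Finpartition (Finset.Icc 1 k)) (hτ : IsLayered r a τ) (n : ℕ) (hn : 0 < n) :
    (A n τ : ℝ) ≤
      (((k : ℝ) + 1) / 2) ^ (2 * n) * (n : ℝ) ^ ((n : ℝ) * (1 - 1 / ((k : ℝ) - r))) := by
  classical
  set s := k - r with hs_def
  have hs1 : 1 ≤ s := by omega
  have hbigs : ∀ σ : Finpartition (Finset.Icc 1 n), ¬ SetPartContains σ τ →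
      (LayeredUB.bigs s σ).card ≤ r - 1 := by
    intro σ hσ
    by_contra h
    push_neg at h
    refine hσ (LayeredUB.contains_of_blocks a hr hrk ha hsum τ hτ σ ?_)
    unfold LayeredUB.bigs at h
    rw [hs_def] at h
    omega
  let Φ : {σ : Finpartition (Finset.Icc 1 n) // ¬ SetPartContains σ τ} → LayeredUB.TT s n r :=
    fun σp => LayeredUB.Phi s r σp.1 (fun i => LayeredUB.lblN_lt hr (hbigs σp.1 σp.2) i)
  have hinj : Function.Injective Φ := by
    intro x y hxy
    have hdec : LayeredUB.decode (Φ x) = LayeredUB.decode (Φ y) := congrArg _ hxy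
    rw [show Φ x = LayeredUB.Phi s r x.1 (fun i => LayeredUB.lblN_lt hr (hbigs x.1 x.2) i)
        from rfl,
      show Φ y = LayeredUB.Phi s r y.1 (fun i => LayeredUB.lblN_lt hr (hbigs y.1 y.2) i)
        from rfl, LayeredUB.decode_Phi, LayeredUB.decode_Phi] at hdec
    have h1 := congrArg Prod.fst hdec
    have h2 := congrArg Prod.snd hdec
    simp only at h1 h2
    apply Subtype.ext
    apply LayeredUB.recon (s := s)
    · intro i hi
      have := congrFun h1 ⟨i, hi⟩
      exact congrArg Fin.val this
    · intro i hi hsm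
      have hpt := congrFun h2 ⟨i, hi⟩
      simp only at hpt
      have hsm' : (y.1.part i).card ≤ s := by
        have hl := congrFun h1 ⟨i, hi⟩
        have hlv : LayeredUB.lblN s x.1 i = LayeredUB.lblN s y.1 i := congrArg Fin.val hl
        rw [← LayeredUB.lblN_eq_zero_iff (s := s) (σ := y.1), ← hlv,
          LayeredUB.lblN_eq_zero_iff]
        exact hsm
      rw [if_pos hsm, if_pos hsm'] at hpt
      exact hpt
  have hA : A n τ ≤ Fintype.card (LayeredUB.TT s n r) := by
    have h1 : A n τ = Nat.card {σ : Finpartition (Finset.Icc 1 n) // ¬ SetPartContains σ τ} :=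
      rfl
    rw [h1, ← Nat.card_eq_fintype_card]
    exact Nat.card_le_card_of_injective Φ hinj
  set x : ℝ := (n : ℝ) * (1 - 1 / (s : ℝ)) with hx_def
  have hsR : (1:ℝ) ≤ (s:ℝ) := by exact_mod_cast hs1
  have hx0 : 0 ≤ 1 - 1 / (s:ℝ) := by
    have h : 1 / (s:ℝ) ≤ 1 := by
      rw [div_le_one (by linarith)]
      exact hsR
    linarith
  have hn1 : (1:ℝ) ≤ (n:ℝ) := by exact_mod_cast hn
  have hcardI : Fintype.card ↥(Finset.Icc 1 n) = n := by
    rw [Fintype.card_coe, Nat.card_Icc]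
    omega
  have hterm : ∀ q : {q : (↥(Finset.Icc 1 n) → Fin r) × Finset ↥(Finset.Icc 1 n) //
      LayeredUB.Valid s q},
      ((q.1.2.card ^ (LayeredUB.ESet q.1).card : ℕ) : ℝ) ≤ (n:ℝ) ^ x := by
    intro q
    obtain ⟨hv1, hv2⟩ := q.2
    have hE : LayeredUB.ESet q.1 = LayeredUB.SmallSet q.1.1 \ q.1.2 := by
      ext i
      simp only [LayeredUB.ESet, LayeredUB.SmallSet, Finset.mem_sdiff, Finset.mem_filter,
        Finset.mem_univ, true_and]
    have he : (LayeredUB.ESet q.1).card = (LayeredUB.SmallSet q.1.1).card - q.1.2.card := by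
      rw [hE, Finset.card_sdiff_of_subset hv2]
    have hMn : q.1.2.card ≤ n := by
      have := Finset.card_le_univ q.1.2
      rwa [hcardI] at this
    have hmn : (LayeredUB.SmallSet q.1.1).card ≤ n := by
      have := Finset.card_le_univ (LayeredUB.SmallSet q.1.1)
      rwa [hcardI] at this
    have hMm : q.1.2.card ≤ (LayeredUB.SmallSet q.1.1).card := Finset.card_le_card hv2
    have step1 : ((q.1.2.card ^ (LayeredUB.ESet q.1).card : ℕ) : ℝ)
        ≤ (n:ℝ) ^ (LayeredUB.ESet q.1).card := by
      push_cast
      exact pow_le_pow_left₀ (by positivity) (by exact_mod_cast hMn) _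
    have step2 : (n:ℝ) ^ (LayeredUB.ESet q.1).card
        = (n:ℝ) ^ (((LayeredUB.ESet q.1).card : ℕ) : ℝ) := (Real.rpow_natCast _ _).symm
    have step3 : (n:ℝ) ^ (((LayeredUB.ESet q.1).card : ℕ) : ℝ) ≤ (n:ℝ) ^ x := by
      apply Real.rpow_le_rpow_of_exponent_le hn1
      rw [he]
      rw [Nat.cast_sub hMm]
      have hv1R : ((LayeredUB.SmallSet q.1.1).card : ℝ) ≤ (s:ℝ) * (q.1.2.card : ℝ) := by
        exact_mod_cast hv1
      have hs0 : (0:ℝ) < s := by linarith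
      have hdiv : ((LayeredUB.SmallSet q.1.1).card : ℝ) / (s:ℝ) ≤ (q.1.2.card : ℝ) := by
        rw [div_le_iff₀ hs0]
        calc ((LayeredUB.SmallSet q.1.1).card : ℝ) ≤ (s:ℝ) * (q.1.2.card : ℝ) := hv1R
          _ = (q.1.2.card : ℝ) * (s:ℝ) := mul_comm _ _
      have hmnR : ((LayeredUB.SmallSet q.1.1).card : ℝ) ≤ (n:ℝ) := by exact_mod_cast hmn
      have hkey : ((LayeredUB.SmallSet q.1.1).card : ℝ) - (q.1.2.card : ℝ)
          ≤ ((LayeredUB.SmallSet q.1.1).card : ℝ) * (1 - 1/(s:ℝ)) := by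
        have hr2 : ((LayeredUB.SmallSet q.1.1).card : ℝ) * (1 - 1/(s:ℝ))
            = ((LayeredUB.SmallSet q.1.1).card : ℝ)
              - ((LayeredUB.SmallSet q.1.1).card : ℝ)/(s:ℝ) := by
          ring
        rw [hr2]
        linarith
      calc ((LayeredUB.SmallSet q.1.1).card : ℝ) - (q.1.2.card : ℝ)
          ≤ ((LayeredUB.SmallSet q.1.1).card : ℝ) * (1 - 1/(s:ℝ)) := hkey
        _ ≤ (n:ℝ) * (1 - 1/(s:ℝ)) := mul_le_mul_of_nonneg_right hmnR hx0
    calc ((q.1.2.card ^ (LayeredUB.ESet q.1).card : ℕ) : ℝ)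
        ≤ (n:ℝ) ^ (LayeredUB.ESet q.1).card := step1
      _ = (n:ℝ) ^ (((LayeredUB.ESet q.1).card : ℕ) : ℝ) := step2
      _ ≤ (n:ℝ) ^ x := step3
  have hcardQ : ((Fintype.card {q : (↥(Finset.Icc 1 n) → Fin r) × Finset ↥(Finset.Icc 1 n) //
      LayeredUB.Valid s q}) : ℝ) ≤ (2*(r:ℝ))^n := by
    have h1 : Fintype.card {q : (↥(Finset.Icc 1 n) → Fin r) × Finset ↥(Finset.Icc 1 n) //
        LayeredUB.Valid s q} ≤
        Fintype.card ((↥(Finset.Icc 1 n) → Fin r) × Finset ↥(Finset.Icc 1 n)) :=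
      Fintype.card_subtype_le _
    have h2 : Fintype.card ((↥(Finset.Icc 1 n) → Fin r) × Finset ↥(Finset.Icc 1 n))
        = r^n * 2^n := by
      rw [Fintype.card_prod, Fintype.card_fun, Fintype.card_finset, Fintype.card_fin, hcardI]
    calc ((Fintype.card {q : (↥(Finset.Icc 1 n) → Fin r) × Finset ↥(Finset.Icc 1 n) //
        LayeredUB.Valid s q}) : ℝ) ≤ ((r^n * 2^n : ℕ) : ℝ) := by
          exact_mod_cast le_trans h1 (le_of_eq h2)
      _ = (2*(r:ℝ))^n := by push_cast; ring
  have hTT : ((Fintype.card (LayeredUB.TT s n r)) : ℝ) ≤ (2*(r:ℝ))^n * (n:ℝ)^x := by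
    rw [LayeredUB.card_TT, Nat.cast_sum]
    calc ∑ q : {q : (↥(Finset.Icc 1 n) → Fin r) × Finset ↥(Finset.Icc 1 n) //
        LayeredUB.Valid s q}, ((q.1.2.card ^ (LayeredUB.ESet q.1).card : ℕ) : ℝ)
        ≤ ∑ _q : {q : (↥(Finset.Icc 1 n) → Fin r) × Finset ↥(Finset.Icc 1 n) //
          LayeredUB.Valid s q}, (n:ℝ)^x := Finset.sum_le_sum (fun q _ => hterm q)
      _ = ((Fintype.card {q : (↥(Finset.Icc 1 n) → Fin r) × Finset ↥(Finset.Icc 1 n) //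
          LayeredUB.Valid s q}) : ℝ) * (n:ℝ)^x := by
          rw [Finset.sum_const, Finset.card_univ, nsmul_eq_mul]
      _ ≤ (2*(r:ℝ))^n * (n:ℝ)^x :=
          mul_le_mul_of_nonneg_right hcardQ (Real.rpow_nonneg (by positivity) _)
  have hsr : (s:ℝ) = (k:ℝ) - r := by
    rw [hs_def]
    exact_mod_cast Nat.cast_sub hrk.le
  have hpow : (2*(r:ℝ))^n ≤ (((k:ℝ)+1)/2)^(2*n) := by
    rw [pow_mul]
    apply pow_le_pow_left₀ (by positivity) ?_ n
    have hkr : (r:ℝ) + 1 ≤ (k:ℝ) := by exact_mod_cast hrk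
    nlinarith [sq_nonneg ((k:ℝ) - 3)]
  have hAx : (A n τ : ℝ) ≤ ((Fintype.card (LayeredUB.TT s n r)) : ℝ) := by exact_mod_cast hA
  calc (A n τ : ℝ) ≤ ((Fintype.card (LayeredUB.TT s n r)) : ℝ) := hAx
    _ ≤ (2*(r:ℝ))^n * (n:ℝ)^x := hTT
    _ ≤ (((k:ℝ)+1)/2)^(2*n) * (n:ℝ)^x :=
        mul_le_mul_of_nonneg_right hpow (Real.rpow_nonneg (by positivity) _)
    _ = (((k : ℝ) + 1) / 2) ^ (2 * n) * (n : ℝ) ^ ((n : ℝ) * (1 - 1 / ((k : ℝ) - r))) := by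
        rw [hx_def, hsr]
end

section
/- Let k and r be positive integers with r < k, set m = k - r, and let a_1, …, a_r be positive integers with a_1 + ⋯ + a_r = k. If n is a positive integer divisible by m, then every uniform set partition of [n] with block size m avoids the layered partition L_{a_1,…,a_r}. -/
/-- For `m = k - r` with `0 < r < k` and `m ∣ n`, every uniform set partition
of `[n]` with block size `m` avoids the layered partition `L_{a_1,…,a_r}` of `[k]`. -/
theorem uniform_avoids_layered (k r : ℕ) (hr : 0 < r) (hrk : r < k) (a : ℕ → ℕ)
    (ha : ∀ i < r, 0 < a i) (hsum : ∑ i ∈ Finset.range r, a i = k)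
    (τ : Finpartition (Finset.Icc 1 k)) (hτ : IsLayered r a τ)
    (n : ℕ) (hn : 0 < n) (hdvd : (k - r) ∣ n)
    (σ : Finpartition (Finset.Icc 1 n)) (hσ : IsUniform n (k - r) σ) :
    ¬ SetPartContains σ τ := by
  rintro ⟨f, hf1, hf2, hf3⟩
  set m := k - r with hm
  have hm0 : 0 < m := by omega
  set q := n / m with hq
  have hq0 : 0 < q := Nat.div_pos (Nat.le_of_dvd hn hdvd) hm0
  have hnmq : m * q = n := Nat.mul_div_cancel' hdvd
  -- interval index bound
  have hgbound : ∀ x ∈ Finset.Icc 1 n, (x - 1) / q < m := by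
    intro x hx
    rw [Finset.mem_Icc] at hx
    rw [Nat.div_lt_iff_lt_mul hq0]
    omega
  -- same block, distinct elements → distinct intervals
  have key : ∀ x ∈ Finset.Icc 1 n, ∀ y ∈ Finset.Icc 1 n, x < y → SameBlock σ x y →
      (x - 1) / q < (y - 1) / q := by
    rintro x hx y hy hxy ⟨B, hB, hxB, hyB⟩
    by_contra h
    have hle : (x - 1) / q ≤ (y - 1) / q := Nat.div_le_div_right (by omega)
    have heq : (y - 1) / q = (x - 1) / q := le_antisymm (le_of_not_gt h) hle
    have hvm : (x - 1) / q < m := hgbound x hx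
    obtain ⟨-, -, hcard⟩ := hσ
    have h1 := hcard ((x - 1) / q) hvm B hB
    rw [← hq] at h1
    rw [Finset.mem_Icc] at hx hy
    have hx1 : (x - 1) / q * q ≤ x - 1 := Nat.div_mul_le_self _ _
    have hx2 : x - 1 < ((x - 1) / q + 1) * q := by
      rw [← Nat.div_lt_iff_lt_mul hq0]; omega
    have hy1 : (x - 1) / q * q ≤ y - 1 := by
      rw [← heq]; exact Nat.div_mul_le_self _ _
    have hy2 : y - 1 < ((x - 1) / q + 1) * q := by
      rw [← Nat.div_lt_iff_lt_mul hq0, heq]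
      omega
    have hmemx : x ∈ Finset.Icc ((x - 1) / q * q + 1) (((x - 1) / q + 1) * q) ∩ B := by
      rw [Finset.mem_inter, Finset.mem_Icc]; exact ⟨⟨by omega, by omega⟩, hxB⟩
    have hmemy : y ∈ Finset.Icc ((x - 1) / q * q + 1) (((x - 1) / q + 1) * q) ∩ B := by
      rw [Finset.mem_inter, Finset.mem_Icc]; exact ⟨⟨by omega, by omega⟩, hyB⟩
    have h2 : 1 < (Finset.Icc ((x - 1) / q * q + 1) (((x - 1) / q + 1) * q) ∩ B).card :=
      Finset.one_lt_card.2 ⟨x, hmemx, y, hmemy, by omega⟩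
    omega
  -- partial sums
  set S : ℕ → ℕ := fun j => ∑ i ∈ Finset.range j, a i with hS
  have hSr : S r = k := hsum
  have hSsucc : ∀ j, S (j + 1) = S j + a j := by
    intro j; simp [hS, Finset.sum_range_succ]
  have hSlt : ∀ j < r, S j < S (j + 1) := by
    intro j hj; have := ha j hj; rw [hSsucc]; omega
  have hSmono : ∀ j j', j ≤ j' → S j ≤ S j' := by
    intro j j' hjj'
    exact Finset.sum_le_sum_of_subset (Finset.range_subset_range.2 hjj')
  have hSge : ∀ j, j ≤ r → j ≤ S j := by
    intro j hj
    induction j with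
    | zero => simp
    | succ i ih =>
      have h1 := ha i (by omega)
      have h2 := ih (by omega)
      rw [hSsucc]; omega
  -- same block of τ
  have hblock : ∀ j < r, ∀ t t', S j + 1 ≤ t → t ≤ S (j + 1) → S j + 1 ≤ t' →
      t' ≤ S (j + 1) → SameBlock τ t t' := by
    intro j hj t t' h1 h2 h3 h4
    refine ⟨Finset.Icc (S j + 1) (S (j + 1)), ?_, Finset.mem_Icc.2 ⟨h1, h2⟩,
      Finset.mem_Icc.2 ⟨h3, h4⟩⟩
    rw [hτ]
    exact Finset.mem_image.2 ⟨j, Finset.mem_range.2 hj, rfl⟩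
  -- t in block j lies in [1, k]
  have hmemk : ∀ j, j < r → ∀ t, S j < t → t ≤ S (j + 1) → t ∈ Finset.Icc 1 k := by
    intro j hj t h1 h2
    have := hSmono (j + 1) r (by omega)
    rw [Finset.mem_Icc]
    omega
  -- main induction
  have main : ∀ t, ∀ j < r, S j < t → t ≤ S (j + 1) → t - 1 - j ≤ (f t - 1) / q := by
    intro t
    induction t using Nat.strong_induction_on with
    | _ t ih =>
      intro j hj h1 h2
      have hjS := hSge j (by omega)
      rcases Nat.lt_or_ge (S j + 1) t with hcase | hcase
      · -- t > S j + 1 : previous element t - 1 in same block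
        have htk : t ∈ Finset.Icc 1 k := hmemk j hj t h1 h2
        have ht1k : t - 1 ∈ Finset.Icc 1 k := hmemk j hj (t - 1) (by omega) (by omega)
        have ihv := ih (t - 1) (by omega) j hj (by omega) (by omega)
        have hsb : SameBlock τ (t - 1) t := hblock j hj (t - 1) t (by omega) (by omega)
          (by omega) h2
        have hsσ : SameBlock σ (f (t - 1)) (f t) := (hf3 (t - 1) ht1k t htk).1 hsb
        have hflt : f (t - 1) < f t := hf2 (t - 1) ht1k t htk (by omega)
        have hk := key (f (t - 1)) (hf1 _ ht1k) (f t) (hf1 _ htk) hflt hsσ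
        omega
      · -- t = S j + 1 : start of block j
        have ht : t = S j + 1 := by omega
        rcases Nat.eq_zero_or_pos j with hj0 | hj0
        · subst hj0
          have h0 : S 0 = 0 := by simp [hS]
          have ht1 : t - 1 - 0 = 0 := by omega
          rw [ht1]
          exact Nat.zero_le _
        · -- predecessor S j is last element of block j - 1
          have hj1 : j - 1 < r := by omega
          have hlt := hSlt (j - 1) hj1
          have heq1 : j - 1 + 1 = j := by omega
          rw [heq1] at hlt
          have ihv := ih (S j) (by omega) (j - 1) hj1 hlt (by rw [heq1])
          have htk : t ∈ Finset.Icc 1 k := hmemk j hj t h1 h2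
          have hSjk : S j ∈ Finset.Icc 1 k := hmemk (j - 1) hj1 (S j) hlt (by rw [heq1])
          have hflt : f (S j) < f t := hf2 (S j) hSjk t htk (by omega)
          have hmono : (f (S j) - 1) / q ≤ (f t - 1) / q :=
            Nat.div_le_div_right (by omega)
          omega
  -- conclude
  have hr1 : r - 1 < r := by omega
  have heq1 : r - 1 + 1 = r := by omega
  have hlast := main k (r - 1) hr1 (by
      have h := hSlt (r - 1) hr1
      rw [heq1] at h
      omega)
    (by rw [heq1, hSr])
  have hkk : k ∈ Finset.Icc 1 k := Finset.mem_Icc.2 ⟨by omega, le_rfl⟩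
  have := hgbound (f k) (hf1 k hkk)
  omega
end

section
/- Let τ be a set partition of [k] and suppose there are at most r - 1 indices i with 1 ≤ i ≤ k - 1 such that i and i+1 lie in different blocks of τ, where 1 ≤ r < k. Set m = k - r. If n is a positive integer divisible by m, then every uniform set partition of [n] with block size m avoids τ. -/
/-- If a set partition `τ` of `[k]` has at most `r - 1` indices
`1 ≤ i ≤ k - 1` with `i` and `i+1` in different blocks (where `1 ≤ r < k`), and `m = k - r`
divides `n`, then every uniform set partition of `[n]` with block size `m` avoids `τ`. -/
theorem uniform_avoids_few_breaks (k r : ℕ) (hr : 0 < r) (hrk : r < k)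
    (τ : Finpartition (Finset.Icc 1 k))
    (hτ : ((Finset.Icc 1 (k - 1)).filter fun i => ¬ SameBlock τ i (i + 1)).card ≤ r - 1)
    (n : ℕ) (hn : 0 < n) (hdvd : (k - r) ∣ n)
    (σ : Finpartition (Finset.Icc 1 n)) (hσ : IsUniform n (k - r) σ) :
    ¬ SetPartContains σ τ := by
  rintro ⟨f, hf1, hf2, hf3⟩
  set m := k - r with hm
  have hm0 : 0 < m := by omega
  obtain ⟨q, hq⟩ := hdvd
  have hq0 : 0 < q := by
    rcases Nat.eq_zero_or_pos q with h | h
    · subst h; simp at hq; omega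
    · exact h
  have hnm : n / m = q := by rw [hq]; exact Nat.mul_div_cancel_left q hm0
  obtain ⟨hc, hcard, huni⟩ := hσ
  set g : ℕ → ℕ := fun i => (f i - 1) / q with hg
  have hfb : ∀ i ∈ Finset.Icc 1 k, 1 ≤ f i ∧ f i ≤ n := by
    intro i hi
    have := hf1 i hi
    simpa [Finset.mem_Icc] using this
  have hglt : ∀ i ∈ Finset.Icc 1 k, g i < m := by
    intro i hi
    obtain ⟨h1, h2⟩ := hfb i hi
    have h2' : f i ≤ m * q := hq ▸ h2
    show (f i - 1) / q < m
    rw [Nat.div_lt_iff_lt_mul hq0]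
    omega
  have hmem : ∀ i ∈ Finset.Icc 1 k,
      f i ∈ Finset.Icc (g i * q + 1) ((g i + 1) * q) := by
    intro i hi
    obtain ⟨h1, h2⟩ := hfb i hi
    have hmod := Nat.div_add_mod (f i - 1) q
    have hmlt : (f i - 1) % q < q := Nat.mod_lt _ hq0
    rw [Nat.mul_comm] at hmod
    show f i ∈ Finset.Icc ((f i - 1) / q * q + 1) (((f i - 1) / q + 1) * q)
    simp only [Finset.mem_Icc, Nat.add_mul, Nat.one_mul]
    omega
  have hmono : ∀ i ∈ Finset.Icc 1 k, ∀ j ∈ Finset.Icc 1 k, i < j → g i ≤ g j := by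
    intro i hi j hj hij
    have := hf2 i hi j hj hij
    exact Nat.div_le_div_right (by omega)
  have hstep : ∀ i, 1 ≤ i → i + 1 ≤ k → SameBlock τ i (i + 1) → g i < g (i + 1) := by
    intro i hi1 hik hsb
    have hi : i ∈ Finset.Icc 1 k := by simp [Finset.mem_Icc]; omega
    have hi' : i + 1 ∈ Finset.Icc 1 k := by simp [Finset.mem_Icc]; omega
    obtain ⟨B, hB, hfi, hfi'⟩ := (hf3 i hi (i + 1) hi').mp hsb
    have hlt := hf2 i hi (i + 1) hi' (by omega)
    have hle := hmono i hi (i + 1) hi' (by omega)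
    rcases lt_or_eq_of_le hle with h | h
    · exact h
    · exfalso
      have hu := huni (g i) (hglt i hi) B hB
      rw [hnm] at hu
      have hmi := hmem i hi
      have hmi' := hmem (i + 1) hi'
      rw [← h] at hmi'
      have h2 : 1 < (Finset.Icc (g i * q + 1) ((g i + 1) * q) ∩ B).card := by
        apply Finset.one_lt_card.mpr
        exact ⟨f i, Finset.mem_inter.mpr ⟨hmi, hfi⟩,
          f (i + 1), Finset.mem_inter.mpr ⟨hmi', hfi'⟩, by omega⟩
      omega
  have key : ∀ d, 1 + d ≤ k →
      ((Finset.Icc 1 d).filter fun t => SameBlock τ t (t + 1)).card ≤ g (1 + d) := by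
    intro d
    induction d with
    | zero => intro _; simp
    | succ d ih =>
      intro hd
      have ihd := ih (by omega)
      have hIcc : Finset.Icc 1 (d + 1) = insert (d + 1) (Finset.Icc 1 d) := by
        ext x
        simp only [Finset.mem_Icc, Finset.mem_insert]
        omega
      rw [hIcc, Finset.filter_insert]
      have hnotmem : d + 1 ∉ Finset.Icc 1 d := by simp
      by_cases hsb : SameBlock τ (d + 1) (d + 2)
      · rw [if_pos hsb, Finset.card_insert_of_notMem (fun h => hnotmem (Finset.filter_subset _ _ h))]
        have := hstep (1 + d) (by omega) (by omega) (by
          have : 1 + d = d + 1 := by omega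
          rw [this]; exact (by simpa using hsb))
        have he : 1 + d + 1 = 1 + (d + 1) := by omega
        rw [he] at this
        omega
      · rw [if_neg hsb]
        have := hmono (1 + d) (by simp [Finset.mem_Icc]; omega)
          (1 + (d + 1)) (by simp [Finset.mem_Icc]; omega) (by omega)
        omega
  have hk2 : 2 ≤ k := by omega
  have hkey := key (k - 1) (by omega)
  have he : 1 + (k - 1) = k := by omega
  rw [he] at hkey
  have hgk : g k < m := hglt k (by simp [Finset.mem_Icc]; omega)
  have hsplit := Finset.card_filter_add_card_filter_not
    (s := Finset.Icc 1 (k - 1)) (p := fun t => SameBlock τ t (t + 1))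
  have hcardI : (Finset.Icc 1 (k - 1)).card = k - 1 := by
    rw [Nat.card_Icc]; omega
  rw [hcardI] at hsplit
  omega
end

section
/- Let k and r be positive integers with r < k, set m = k - r, and let a_1, …, a_r be positive integers with a_1 + ⋯ + a_r = k. If n is a positive integer divisible by m, then A_n(L_{a_1,…,a_r}) ≥ ((n/m)!)^(m-1). -/
namespace LayeredLB

open Finset

lemma idx_eq {q : ℕ} (hq : 0 < q) {j c : ℕ} (hc : c < q) : (j * q + c) / q = j := by
  rw [mul_comm, Nat.mul_add_div hq, Nat.div_eq_of_lt hc, add_zero]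

lemma decomp_eq {q : ℕ} {j1 j2 c1 c2 : ℕ} (h1 : c1 < q) (h2 : c2 < q)
    (h : j1 * q + c1 = j2 * q + c2) : j1 = j2 ∧ c1 = c2 := by
  have hq : 0 < q := lt_of_le_of_lt (Nat.zero_le c1) h1
  have hj : j1 = j2 := by
    have e1 : (j1 * q + c1) / q = j1 := idx_eq hq h1
    have e2 : (j2 * q + c2) / q = j2 := idx_eq hq h2
    rw [← e1, ← e2, h]
  refine ⟨hj, ?_⟩
  subst hj
  exact Nat.add_left_cancel h

def uniBlock (m q : ℕ) (p : ℕ → Equiv.Perm (Fin q)) (b : Fin q) : Finset ℕ :=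
  (Finset.range m).image (fun j => j * q + ((p j) b : ℕ) + 1)

lemma mem_uniBlock {m q : ℕ} {p : ℕ → Equiv.Perm (Fin q)} {b : Fin q} {x : ℕ} :
    x ∈ uniBlock m q p b ↔ ∃ j < m, x = j * q + ((p j) b : ℕ) + 1 := by
  simp only [uniBlock, Finset.mem_image, Finset.mem_range]
  constructor
  · rintro ⟨j, hj, rfl⟩; exact ⟨j, hj, rfl⟩
  · rintro ⟨j, hj, rfl⟩; exact ⟨j, hj, rfl⟩

lemma uniBlock_eq_of_mem {m q : ℕ} {p : ℕ → Equiv.Perm (Fin q)} {b b' : Fin q} {x : ℕ}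
    (hb : x ∈ uniBlock m q p b) (hb' : x ∈ uniBlock m q p b') : b = b' := by
  obtain ⟨j, hj, rfl⟩ := mem_uniBlock.1 hb
  obtain ⟨j', hj', he⟩ := mem_uniBlock.1 hb'
  have he' : j * q + ((p j) b : ℕ) = j' * q + ((p j') b' : ℕ) := Nat.succ_injective he
  obtain ⟨rfl, hc⟩ := decomp_eq (Fin.is_lt _) (Fin.is_lt _) he'
  exact (p j).injective (Fin.ext hc)

def uniPart (m q n : ℕ) (hm : 0 < m) (hq : 0 < q) (hn : n = m * q)
    (p : ℕ → Equiv.Perm (Fin q)) : Finpartition (Finset.Icc 1 n) where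
  parts := Finset.univ.image (uniBlock m q p)
  supIndep := by
    rw [Finset.supIndep_iff_pairwiseDisjoint]
    rintro B hB C hC hne
    simp only [Finset.coe_image, Set.mem_image, Finset.mem_coe, Finset.mem_univ, true_and,
      Set.mem_setOf_eq, Finset.coe_univ, Set.image_univ, Set.mem_range] at hB hC
    obtain ⟨b, rfl⟩ := hB
    obtain ⟨c, rfl⟩ := hC
    exact Finset.disjoint_left.2 fun x hx hx' =>
      hne (congrArg (uniBlock m q p) (uniBlock_eq_of_mem hx hx'))
  sup_parts := by
    rw [Finset.sup_image, Function.id_comp]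
    ext x
    rw [Finset.mem_sup]
    constructor
    · rintro ⟨b, -, hb⟩
      obtain ⟨j, hj, rfl⟩ := mem_uniBlock.1 hb
      have hc : ((p j) b : ℕ) < q := Fin.is_lt _
      have h1 : j * q ≤ (m - 1) * q := Nat.mul_le_mul_right _ (by omega)
      have h2 : (m - 1) * q + q = m * q := by
        calc (m - 1) * q + q = ((m - 1) + 1) * q := (add_one_mul _ _).symm
          _ = m * q := by rw [Nat.sub_add_cancel hm]
      refine Finset.mem_Icc.2 ⟨Nat.le_add_left 1 _, ?_⟩
      rw [hn]
      omega
    · intro hx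
      obtain ⟨hx1, hx2⟩ := Finset.mem_Icc.1 hx
      have hc : (x - 1) % q < q := Nat.mod_lt _ hq
      have hjm : (x - 1) / q < m := by
        rw [Nat.div_lt_iff_lt_mul hq]
        have hxn : x ≤ m * q := hn ▸ hx2
        have : 0 < m * q := Nat.mul_pos hm hq
        omega
      refine ⟨(p ((x - 1) / q)).symm ⟨(x - 1) % q, hc⟩, Finset.mem_univ _,
        mem_uniBlock.2 ⟨(x - 1) / q, hjm, ?_⟩⟩
      rw [Equiv.apply_symm_apply]
      have hdm : q * ((x - 1) / q) + (x - 1) % q = x - 1 := Nat.div_add_mod (x - 1) q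
      show x = (x - 1) / q * q + (x - 1) % q + 1
      rw [mul_comm ((x - 1) / q) q]
      omega
  bot_notMem := by
    intro hmem
    rw [Finset.mem_image] at hmem
    obtain ⟨b, -, hb⟩ := hmem
    have hx : (0 * q + ((p 0) b : ℕ) + 1) ∈ uniBlock m q p b := mem_uniBlock.2 ⟨0, hm, rfl⟩
    rw [hb] at hx
    simp at hx

lemma uniPart_parts {m q n : ℕ} (hm : 0 < m) (hq : 0 < q) (hn : n = m * q)
    (p : ℕ → Equiv.Perm (Fin q)) :
    (uniPart m q n hm hq hn p).parts = Finset.univ.image (uniBlock m q p) := rfl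

lemma sameBlock_uniPart {m q n : ℕ} {hm : 0 < m} {hq : 0 < q} {hn : n = m * q}
    {p : ℕ → Equiv.Perm (Fin q)} {u v : ℕ}
    (h : SameBlock (uniPart m q n hm hq hn p) u v) (huv : u < v) :
    (u - 1) / q < (v - 1) / q := by
  obtain ⟨B, hB, hu, hv⟩ := h
  rw [uniPart_parts, Finset.mem_image] at hB
  obtain ⟨b, -, rfl⟩ := hB
  obtain ⟨j1, hj1, rfl⟩ := mem_uniBlock.1 hu
  obtain ⟨j2, hj2, rfl⟩ := mem_uniBlock.1 hv
  have hc1 : ((p j1) b : ℕ) < q := Fin.is_lt _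
  have hc2 : ((p j2) b : ℕ) < q := Fin.is_lt _
  have e1 : (j1 * q + ((p j1) b : ℕ) + 1 - 1) / q = j1 := by
    rw [Nat.add_sub_cancel]; exact idx_eq hq hc1
  have e2 : (j2 * q + ((p j2) b : ℕ) + 1 - 1) / q = j2 := by
    rw [Nat.add_sub_cancel]; exact idx_eq hq hc2
  rw [e1, e2]
  rcases lt_trichotomy j1 j2 with h | h | h
  · exact h
  · subst h; exact absurd huv (lt_irrefl _)
  · exfalso
    have h2 : j2 * q + q ≤ j1 * q := by
      calc j2 * q + q = (j2 + 1) * q := (add_one_mul _ _).symm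
        _ ≤ j1 * q := Nat.mul_le_mul_right _ h
    omega

def extPerm (m q : ℕ) (g : Fin (m - 1) → Equiv.Perm (Fin q)) : ℕ → Equiv.Perm (Fin q) :=
  fun j => if h : 1 ≤ j ∧ j - 1 < m - 1 then g ⟨j - 1, h.2⟩ else 1

lemma extPerm_zero (m q : ℕ) (g : Fin (m - 1) → Equiv.Perm (Fin q)) :
    extPerm m q g 0 = 1 := by simp [extPerm]

lemma extPerm_succ (m q : ℕ) (g : Fin (m - 1) → Equiv.Perm (Fin q)) (i : Fin (m - 1)) :
    extPerm m q g ((i : ℕ) + 1) = g i := by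
  have h : 1 ≤ (i : ℕ) + 1 ∧ (i : ℕ) + 1 - 1 < m - 1 := ⟨Nat.le_add_left 1 _, by simp [i.is_lt]⟩
  rw [extPerm]
  rw [dif_pos h]
  have he : (⟨(i : ℕ) + 1 - 1, h.2⟩ : Fin (m - 1)) = i := Fin.ext (by simp)
  rw [he]

lemma uniPart_inj {m q n : ℕ} {hm : 0 < m} {hq : 0 < q} {hn : n = m * q}
    {p p' : ℕ → Equiv.Perm (Fin q)} (h0 : p 0 = 1) (h0' : p' 0 = 1)
    (h : uniPart m q n hm hq hn p = uniPart m q n hm hq hn p') :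
    ∀ j < m, p j = p' j := by
  have hparts := congrArg Finpartition.parts h
  rw [uniPart_parts, uniPart_parts] at hparts
  intro j hj
  ext b
  have hb : ((b : ℕ) + 1) ∈ uniBlock m q p b :=
    mem_uniBlock.2 ⟨0, hm, by rw [h0]; simp⟩
  have hb' : ((b : ℕ) + 1) ∈ uniBlock m q p' b :=
    mem_uniBlock.2 ⟨0, hm, by rw [h0']; simp⟩
  have hmem : uniBlock m q p b ∈ Finset.univ.image (uniBlock m q p') := by
    rw [← hparts]; exact Finset.mem_image_of_mem _ (Finset.mem_univ b)
  rw [Finset.mem_image] at hmem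
  obtain ⟨b', -, hbb⟩ := hmem
  have hb2 : ((b : ℕ) + 1) ∈ uniBlock m q p' b' := by rw [hbb]; exact hb
  have hbeq : b' = b := uniBlock_eq_of_mem hb2 hb'
  rw [hbeq] at hbb
  have hy : (j * q + ((p j) b : ℕ) + 1) ∈ uniBlock m q p' b := by
    rw [hbb]; exact mem_uniBlock.2 ⟨j, hj, rfl⟩
  obtain ⟨j2, hj2, he⟩ := mem_uniBlock.1 hy
  have he' : j * q + ((p j) b : ℕ) = j2 * q + ((p' j2) b : ℕ) := Nat.succ_injective he
  obtain ⟨hjj, hcc⟩ := decomp_eq (Fin.is_lt _) (Fin.is_lt _) he'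
  subst hjj
  exact hcc

lemma exists_cover (a : ℕ → ℕ) : ∀ (r x : ℕ), 1 ≤ x → x ≤ ∑ i ∈ Finset.range r, a i →
    ∃ j < r, (∑ i ∈ Finset.range j, a i) < x ∧ x ≤ ∑ i ∈ Finset.range (j + 1), a i := by
  intro r
  induction r with
  | zero => intro x hx hxs; rw [Finset.range_zero, Finset.sum_empty] at hxs; omega
  | succ r ih =>
    intro x hx hxs
    by_cases h : x ≤ ∑ i ∈ Finset.range r, a i
    · obtain ⟨j, hj, h1, h2⟩ := ih x hx h
      exact ⟨j, Nat.lt_succ_of_lt hj, h1, h2⟩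
    · push_neg at h
      exact ⟨r, Nat.lt_succ_self r, h, hxs⟩

lemma uniPart_avoids (k r : ℕ) (hr : 0 < r) (a : ℕ → ℕ)
    (hsum : ∑ i ∈ Finset.range r, a i = k)
    (τ : Finpartition (Finset.Icc 1 k)) (hτ : IsLayered r a τ)
    (m q n : ℕ) (hm : 0 < m) (hq : 0 < q) (hn : n = m * q) (hkr : k = m + r)
    (p : ℕ → Equiv.Perm (Fin q)) :
    ¬ SetPartContains (uniPart m q n hm hq hn p) τ := by
  rintro ⟨f, hf1, hf2, hf3⟩
  have key : ∀ x, 1 ≤ x → x ≤ k →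
      x ≤ (f x - 1) / q + ((Finset.range r).filter
        (fun i => ∑ t ∈ Finset.range (i + 1), a t < x)).card + 1 := by
    intro x hx
    induction x, hx using Nat.le_induction with
    | base => intro _; exact Nat.le_add_left 1 _
    | succ x hx1 IH =>
      intro hxk1
      have hxk : x ≤ k := by omega
      have IH' := IH hxk
      obtain ⟨j, hjr, hjl, hju⟩ := exists_cover a r x hx1 (by rw [hsum]; exact hxk)
      have hxm : x ∈ Finset.Icc 1 k := Finset.mem_Icc.2 ⟨hx1, hxk⟩
      have hxm1 : x + 1 ∈ Finset.Icc 1 k := Finset.mem_Icc.2 ⟨by omega, hxk1⟩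
      have hflt : f x < f (x + 1) := hf2 x hxm (x + 1) hxm1 (lt_add_one x)
      by_cases hend : ∑ t ∈ Finset.range (j + 1), a t = x
      · have hdiv : (f x - 1) / q ≤ (f (x + 1) - 1) / q :=
          Nat.div_le_div_right (by omega)
        have hnotmem : j ∉ (Finset.range r).filter
            (fun i => ∑ t ∈ Finset.range (i + 1), a t < x) := by
          rw [Finset.mem_filter]; push_neg; intro _; omega
        have hsub : insert j ((Finset.range r).filter
              (fun i => ∑ t ∈ Finset.range (i + 1), a t < x))
            ⊆ (Finset.range r).filter (fun i => ∑ t ∈ Finset.range (i + 1), a t < x + 1) := by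
          intro i hi
          rw [Finset.mem_insert] at hi
          rcases hi with rfl | hi
          · exact Finset.mem_filter.2 ⟨Finset.mem_range.2 hjr, by omega⟩
          · rw [Finset.mem_filter] at hi ⊢
            exact ⟨hi.1, by omega⟩
        have hcard : ((Finset.range r).filter
              (fun i => ∑ t ∈ Finset.range (i + 1), a t < x)).card + 1
            ≤ ((Finset.range r).filter
              (fun i => ∑ t ∈ Finset.range (i + 1), a t < x + 1)).card := by
          rw [← Finset.card_insert_of_notMem hnotmem]
          exact Finset.card_le_card hsub
        omega
      · have hju1 : x + 1 ≤ ∑ t ∈ Finset.range (j + 1), a t := by omega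
        have hτblock : Finset.Icc ((∑ t ∈ Finset.range j, a t) + 1)
            (∑ t ∈ Finset.range (j + 1), a t) ∈ τ.parts := by
          rw [hτ]; exact Finset.mem_image_of_mem _ (Finset.mem_range.2 hjr)
        have hsb : SameBlock τ x (x + 1) :=
          ⟨_, hτblock, Finset.mem_Icc.2 ⟨by omega, hju⟩, Finset.mem_Icc.2 ⟨by omega, hju1⟩⟩
        have hsσ : SameBlock (uniPart m q n hm hq hn p) (f x) (f (x + 1)) :=
          (hf3 x hxm (x + 1) hxm1).1 hsb
        have hdiv : (f x - 1) / q < (f (x + 1) - 1) / q := sameBlock_uniPart hsσ hflt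
        have hcard : ((Finset.range r).filter
              (fun i => ∑ t ∈ Finset.range (i + 1), a t < x)).card
            ≤ ((Finset.range r).filter
              (fun i => ∑ t ∈ Finset.range (i + 1), a t < x + 1)).card := by
          refine Finset.card_le_card fun i hi => ?_
          rw [Finset.mem_filter] at hi ⊢
          exact ⟨hi.1, by omega⟩
        omega
  have hk := key k (by omega) le_rfl
  have hfk : f k ∈ Finset.Icc 1 n := hf1 k (Finset.mem_Icc.2 ⟨by omega, le_rfl⟩)
  rw [Finset.mem_Icc] at hfk
  have hdiv : (f k - 1) / q ≤ m - 1 := by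
    have hmm : (m - 1) * q + q = m * q := by
      calc (m - 1) * q + q = ((m - 1) + 1) * q := (add_one_mul _ _).symm
        _ = m * q := by rw [Nat.sub_add_cancel hm]
    have h1 : f k - 1 ≤ (m - 1) * q + (q - 1) := by
      have hfn : f k ≤ m * q := hn ▸ hfk.2
      omega
    calc (f k - 1) / q ≤ ((m - 1) * q + (q - 1)) / q := Nat.div_le_div_right h1
      _ = m - 1 := idx_eq hq (by omega)
  have hcard : ((Finset.range r).filter
      (fun i => ∑ t ∈ Finset.range (i + 1), a t < k)).card ≤ r - 1 := by
    refine le_trans (Finset.card_le_card ?_) (le_of_eq (Finset.card_range (r - 1)))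
    intro i hi
    rw [Finset.mem_filter, Finset.mem_range] at hi
    obtain ⟨hi1, hi2⟩ := hi
    rw [Finset.mem_range]
    by_contra hcon
    push_neg at hcon
    have hir : i + 1 = r := by omega
    rw [hir, hsum] at hi2
    exact lt_irrefl _ hi2
  omega

end LayeredLB

/-- For a layered partition `L_{a_1,…,a_r}` of `[k]` with `r < k`,
`m = k - r`, and `m ∣ n`, we have `A_n(L_{a_1,…,a_r}) ≥ ((n/m)!)^(m-1)`. -/
theorem layered_factorial_lower_bound (k r : ℕ) (hr : 0 < r) (hrk : r < k) (a : ℕ → ℕ)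
    (ha : ∀ i < r, 0 < a i) (hsum : ∑ i ∈ Finset.range r, a i = k)
    (τ : Finpartition (Finset.Icc 1 k)) (hτ : IsLayered r a τ)
    (n : ℕ) (hn : 0 < n) (hdvd : (k - r) ∣ n) :
    (n / (k - r)).factorial ^ (k - r - 1) ≤ A n τ := by
  classical
  set m := k - r with hmdef
  have hm : 0 < m := by omega
  set q := n / m with hqdef
  have hnq : n = m * q := (Nat.mul_div_cancel' hdvd).symm
  have hq : 0 < q := by
    rcases Nat.eq_zero_or_pos q with h | h
    · rw [h, mul_zero] at hnq; omega
    · exact h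
  have hkr : k = m + r := by omega
  have havoid : ∀ g : Fin (m - 1) → Equiv.Perm (Fin q),
      ¬ SetPartContains (LayeredLB.uniPart m q n hm hq hnq (LayeredLB.extPerm m q g)) τ :=
    fun g => LayeredLB.uniPart_avoids k r hr a hsum τ hτ m q n hm hq hnq hkr _
  have hinj : Function.Injective (fun g : Fin (m - 1) → Equiv.Perm (Fin q) =>
      (⟨LayeredLB.uniPart m q n hm hq hnq (LayeredLB.extPerm m q g), havoid g⟩ :
        {σ : Finpartition (Finset.Icc 1 n) // ¬ SetPartContains σ τ})) := by
    intro g g' hgg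
    have hFg : LayeredLB.uniPart m q n hm hq hnq (LayeredLB.extPerm m q g)
        = LayeredLB.uniPart m q n hm hq hnq (LayeredLB.extPerm m q g') :=
      congrArg Subtype.val hgg
    have hall := LayeredLB.uniPart_inj (LayeredLB.extPerm_zero m q g)
      (LayeredLB.extPerm_zero m q g') hFg
    funext i
    have hi1 : ((i : ℕ) + 1) < m := by have := i.is_lt; omega
    have := hall ((i : ℕ) + 1) hi1
    rwa [LayeredLB.extPerm_succ, LayeredLB.extPerm_succ] at this
  have hcard := Nat.card_le_card_of_injective _ hinj
  have hdom : Nat.card (Fin (m - 1) → Equiv.Perm (Fin q)) = q.factorial ^ (m - 1) := by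
    simp [Nat.card_eq_fintype_card, Fintype.card_fun, Fintype.card_perm]
  rw [A]
  rw [← hdom]
  exact hcard
end

section
/- Let k and r be positive integers with r < k, and let a_1, …, a_r be positive integers with a_1 + ⋯ + a_r = k. Then there exists a real constant c > 0 such that for all positive integers n, A_n(L_{a_1,…,a_r}) ≥ c^n · n^(n(1 - 1/(k-r))). -/
open Finset

/-- The partition of `Icc 1 n` into fibers of `g`. -/
def fiberPart (n : ℕ) (g : ℕ → ℕ) : Finpartition (Finset.Icc 1 n) where
  parts := (Finset.Icc 1 n).image (fun x => (Finset.Icc 1 n).filter (fun y => g y = g x))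
  supIndep := by
    rw [Finset.supIndep_iff_pairwiseDisjoint]
    intro B hB C hC hBC
    simp only [Finset.coe_image, Set.mem_image] at hB hC
    obtain ⟨x, hx, rfl⟩ := hB
    obtain ⟨y, hy, rfl⟩ := hC
    by_cases h : g x = g y
    · exact absurd (by simp [h]) hBC
    · simp only [Function.onFun, id]
      rw [Finset.disjoint_left]
      intro z hz1 hz2
      simp only [Finset.mem_filter] at hz1 hz2
      exact h (hz1.2 ▸ hz2.2)
  sup_parts := by
    apply le_antisymm
    · intro z hz
      rw [Finset.mem_sup] at hz
      obtain ⟨B, hB, hzB⟩ := hz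
      simp only [Finset.mem_image] at hB
      obtain ⟨x, hx, rfl⟩ := hB
      exact (Finset.mem_filter.1 hzB).1
    · intro z hz
      rw [Finset.mem_sup]
      exact ⟨_, Finset.mem_image_of_mem _ hz, by simp [hz]⟩
  bot_notMem := by
    simp only [Finset.bot_eq_empty, Finset.mem_image]
    rintro ⟨x, hx, h⟩
    have : x ∈ (Finset.Icc 1 n).filter (fun y => g y = g x) := by simp [hx]
    rw [h] at this
    exact absurd this (Finset.notMem_empty x)

lemma sameBlock_fiberPart {n : ℕ} {g : ℕ → ℕ} {x y : ℕ} :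
    SameBlock (fiberPart n g) x y ↔ x ∈ Finset.Icc 1 n ∧ y ∈ Finset.Icc 1 n ∧ g x = g y := by
  constructor
  · rintro ⟨B, hB, hx, hy⟩
    simp only [fiberPart, Finset.mem_image] at hB
    obtain ⟨z, hz, rfl⟩ := hB
    simp only [Finset.mem_filter] at hx hy
    exact ⟨hx.1, hy.1, hx.2.trans hy.2.symm⟩
  · rintro ⟨hx, hy, h⟩
    exact ⟨_, by simp only [fiberPart, Finset.mem_image]; exact ⟨x, hx, rfl⟩,
      by simp [hx], by simp [hy, h]⟩
/-- The block-index function for our uniform-type partition. -/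
def gfun (m q : ℕ) (π : ℕ → Equiv.Perm (Fin q)) (x : ℕ) : ℕ :=
  if h : 1 ≤ x ∧ x ≤ m * q then
    ((π ((x - 1) / q)) ⟨(x - 1) % q, Nat.mod_lt _ (Nat.pos_of_ne_zero (fun hq => by
      subst hq; simp at h; omega))⟩ : Fin q)
  else q + x

lemma gfun_prefix {m q : ℕ} (π : ℕ → Equiv.Perm (Fin q)) {x : ℕ} (h1 : 1 ≤ x)
    (h2 : x ≤ m * q) (hq : 0 < q) :
    gfun m q π x = ((π ((x - 1) / q)) ⟨(x - 1) % q, Nat.mod_lt _ hq⟩ : Fin q) := by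
  rw [gfun, dif_pos ⟨h1, h2⟩]

lemma gfun_prefix_lt {m q : ℕ} (π : ℕ → Equiv.Perm (Fin q)) {x : ℕ} (h1 : 1 ≤ x)
    (h2 : x ≤ m * q) : gfun m q π x < q := by
  have hq : 0 < q := Nat.pos_of_ne_zero (fun hq => by subst hq; omega)
  rw [gfun_prefix π h1 h2 hq]
  exact ((π ((x - 1) / q)) _).isLt

lemma gfun_suffix {m q : ℕ} (π : ℕ → Equiv.Perm (Fin q)) {x : ℕ} (h : ¬ (1 ≤ x ∧ x ≤ m * q)) :
    gfun m q π x = q + x := by rw [gfun, dif_neg h]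

/-- Key structural lemma: two distinct elements in the same fiber of `gfun` both lie in
the "uniform" prefix and lie in distinct intervals. -/
lemma gfun_eq_lt {m q : ℕ} (π : ℕ → Equiv.Perm (Fin q)) {x y : ℕ} (hx : 1 ≤ x)
    (hxy : x < y) (h : gfun m q π x = gfun m q π y) :
    x ≤ m * q ∧ y ≤ m * q ∧ (x - 1) / q < (y - 1) / q := by
  by_cases hy2 : y ≤ m * q
  · have hx2 : x ≤ m * q := le_of_lt (lt_of_lt_of_le hxy hy2)
    have hq : 0 < q := Nat.pos_of_ne_zero (fun hq => by subst hq; omega)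
    refine ⟨hx2, hy2, ?_⟩
    have hle : (x - 1) / q ≤ (y - 1) / q := Nat.div_le_div_right (by omega)
    rcases lt_or_eq_of_le hle with h' | h'
    · exact h'
    · exfalso
      rw [gfun_prefix π hx hx2 hq, gfun_prefix π (by omega) hy2 hq, h'] at h
      have := (π ((y - 1) / q)).injective (Fin.val_injective h)
      have hmod : (x - 1) % q = (y - 1) % q := congrArg Fin.val this
      have hxy1 : x - 1 = y - 1 := by
        rw [← Nat.div_add_mod (x - 1) q, ← Nat.div_add_mod (y - 1) q, h', hmod]
      omega
  · exfalso
    rw [gfun_suffix π (fun hc => hy2 hc.2)] at h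
    by_cases hx2 : x ≤ m * q
    · have hlt := gfun_prefix_lt π hx hx2
      omega
    · rw [gfun_suffix π (fun hc => hx2 hc.2)] at h
      omega
lemma avoid_main {k r : ℕ} (hrk : r < k) {a : ℕ → ℕ}
    (ha : ∀ i < r, 0 < a i) (hsum : ∑ i ∈ Finset.range r, a i = k)
    {τ : Finpartition (Finset.Icc 1 k)} (hτ : IsLayered r a τ)
    {n m q : ℕ} (hm : m = k - r) (hmq : m * q ≤ n) {g : ℕ → ℕ}
    (hg : ∀ x y : ℕ, 1 ≤ x → x < y → g x = g y →
      x ≤ m * q ∧ y ≤ m * q ∧ (x - 1) / q < (y - 1) / q) :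
    ¬ SetPartContains (fiberPart n g) τ := by
  classical
  rintro ⟨f, hf1, hf2, hf3⟩
  set pref : ℕ → ℕ := fun j => ∑ i ∈ Finset.range j, a i with hpref
  have pref_mono : ∀ {j1 j2 : ℕ}, j1 ≤ j2 → pref j1 ≤ pref j2 := by
    intro j1 j2 h
    exact Finset.sum_le_sum_of_subset (Finset.range_subset_range.2 h)
  have pref_succ : ∀ j, pref (j + 1) = pref j + a j := by
    intro j; exact Finset.sum_range_succ a j
  have pref_r : pref r = k := hsum
  have pref_le_k : ∀ {j}, j ≤ r → pref j ≤ k := fun h => pref_r ▸ pref_mono h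
  -- basic step facts for two consecutive elements of the same layer
  have step : ∀ j < r, ∀ i, pref j + 1 ≤ i → i + 1 ≤ pref (j + 1) →
      g (f i) = g (f (i + 1)) ∧ f i < f (i + 1) ∧ 1 ≤ f i := by
    intro j hj i hi1 hi2
    have hik : i + 1 ≤ k := le_trans hi2 (pref_le_k hj)
    have hmem1 : i ∈ Finset.Icc 1 k := Finset.mem_Icc.2 ⟨by omega, by omega⟩
    have hmem2 : i + 1 ∈ Finset.Icc 1 k := Finset.mem_Icc.2 ⟨by omega, by omega⟩
    have hB : SameBlock τ i (i + 1) := by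
      refine ⟨Finset.Icc (pref j + 1) (pref (j + 1)), ?_, ?_, ?_⟩
      · rw [hτ]
        exact Finset.mem_image.2 ⟨j, Finset.mem_range.2 hj, rfl⟩
      · exact Finset.mem_Icc.2 ⟨hi1, by omega⟩
      · exact Finset.mem_Icc.2 ⟨by omega, hi2⟩
    have hσ := (hf3 i hmem1 (i + 1) hmem2).1 hB
    have hgeq := (sameBlock_fiberPart.1 hσ).2.2
    have hlt := hf2 i hmem1 (i + 1) hmem2 (by omega)
    have h1 := (Finset.mem_Icc.1 (hf1 i hmem1)).1
    exact ⟨hgeq, hlt, h1⟩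
  -- some layer has at least 2 elements
  have ⟨j2, hj2r, hj2⟩ : ∃ j < r, 2 ≤ a j := by
    by_contra hcon
    push_neg at hcon
    have : ∑ i ∈ Finset.range r, a i ≤ ∑ _i ∈ Finset.range r, 1 :=
      Finset.sum_le_sum (fun i hi => by
        have h1 := hcon i (Finset.mem_range.1 hi)
        omega)
    simp at this
    omega
  by_cases hex : ∃ i ∈ Finset.Icc 1 k, f i ≤ m * q
  · -- there is an element mapped to the uniform prefix; take the largest one
    set T : Finset ℕ := (Finset.Icc 1 k).filter (fun i => f i ≤ m * q) with hT
    have hTne : T.Nonempty := by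
      obtain ⟨i, hi, hfi⟩ := hex
      exact ⟨i, Finset.mem_filter.2 ⟨hi, hfi⟩⟩
    set i₀ : ℕ := T.max' hTne with hi₀
    have hi₀T := T.max'_mem hTne
    have hi₀k : i₀ ∈ Finset.Icc 1 k := (Finset.mem_filter.1 hi₀T).1
    have hfi₀ : f i₀ ≤ m * q := (Finset.mem_filter.1 hi₀T).2
    have hi₀max : ∀ i ∈ Finset.Icc 1 k, f i ≤ m * q → i ≤ i₀ :=
      fun i hi hfi => T.le_max' i (Finset.mem_filter.2 ⟨hi, hfi⟩)
    have hfi₀1 : 1 ≤ f i₀ := (Finset.mem_Icc.1 (hf1 i₀ hi₀k)).1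
    have hq : 0 < q := by
      rcases Nat.eq_zero_or_pos q with h0 | h0
      · subst h0; simp at hfi₀; omega
      · exact h0
    -- every i ≤ i₀ is mapped into the prefix
    have hpre : ∀ i ∈ Finset.Icc 1 k, i ≤ i₀ → f i ≤ m * q := by
      intro i hi hii
      rcases Nat.lt_or_ge i i₀ with h | h
      · exact le_trans (le_of_lt (hf2 i hi i₀ hi₀k h)) hfi₀
      · have : i = i₀ := by omega
        subst this; exact hfi₀
    -- find the layer of i₀
    have h1i₀ : 1 ≤ i₀ := (Finset.mem_Icc.1 hi₀k).1
    have hki₀ : i₀ ≤ k := (Finset.mem_Icc.1 hi₀k).2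
    set U : Finset ℕ := (Finset.range r).filter (fun j => pref j < i₀) with hU
    have hUne : U.Nonempty := ⟨0, Finset.mem_filter.2 ⟨Finset.mem_range.2 (by omega),
      by show pref 0 < i₀; have h0 : pref 0 = 0 := Finset.sum_range_zero a; omega⟩⟩
    set j₀ : ℕ := U.max' hUne with hj₀
    have hj₀U := U.max'_mem hUne
    have hj₀r : j₀ < r := Finset.mem_range.1 (Finset.mem_filter.1 hj₀U).1
    have hj₀lt : pref j₀ < i₀ := (Finset.mem_filter.1 hj₀U).2
    have hj₀le : i₀ ≤ pref (j₀ + 1) := by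
      by_contra hcon
      push_neg at hcon
      rcases Nat.lt_or_ge (j₀ + 1) r with h | h
      · exact absurd (U.le_max' (j₀ + 1) (Finset.mem_filter.2
          ⟨Finset.mem_range.2 h, by omega⟩)) (by omega)
      · have := pref_le_k (le_refl r)
        have := pref_mono (show r ≤ j₀ + 1 by omega)
        omega
    -- the induction: position within [1, i₀] is bounded by interval index plus layer index
    have claim : ∀ i, ∀ j, j < r → pref j < i → i ≤ pref (j + 1) → i ≤ i₀ →
        i ≤ (f i - 1) / q + j + 1 := by
      intro i
      induction i using Nat.strong_induction_on with
      | _ i IH =>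
        intro j hj hji hij hii
        rcases Nat.lt_or_ge (pref j + 1) i with hgt | hle
        · -- i - 1 is in the same layer j
          have IH1 := IH (i - 1) (by omega) j hj (by omega) (by omega) (by omega)
          have hstep := step j hj (i - 1) (by omega) (by omega)
          have hi1 : i - 1 + 1 = i := by omega
          rw [hi1] at hstep
          have hkey := hg (f (i - 1)) (f i) hstep.2.2 hstep.2.1 hstep.1
          omega
        · -- i = pref j + 1 : first element of its layer
          have hi : i = pref j + 1 := by omega
          rcases Nat.eq_zero_or_pos j with hj0 | hjpos
          · subst hj0
            have h0 : pref 0 = 0 := Finset.sum_range_zero a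
            have hge : 0 ≤ (f i - 1) / q := Nat.zero_le _
            omega
          · obtain ⟨jp, rfl⟩ : ∃ jp, j = jp + 1 := ⟨j - 1, by omega⟩
            have hpj : pref (jp + 1) = pref jp + a jp := pref_succ jp
            have haj1 : 1 ≤ a jp := ha jp (by omega)
            have IH1 := IH (i - 1) (by omega) jp (by omega) (by omega) (by omega) (by omega)
            -- monotonicity of the interval index
            have hmem1 : i - 1 ∈ Finset.Icc 1 k := Finset.mem_Icc.2 ⟨by omega,
              by have := pref_le_k (show jp + 1 + 1 ≤ r by omega); omega⟩
            have hmem2 : i ∈ Finset.Icc 1 k := Finset.mem_Icc.2 ⟨by omega,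
              by have := pref_le_k (show jp + 1 + 1 ≤ r by omega); omega⟩
            have hlt := hf2 (i - 1) hmem1 i hmem2 (by omega)
            have hdiv : (f (i - 1) - 1) / q ≤ (f i - 1) / q :=
              Nat.div_le_div_right (by omega)
            omega
    have hclaim := claim i₀ j₀ hj₀r hj₀lt hj₀le (le_refl i₀)
    -- interval index is at most m - 1
    have hiota : (f i₀ - 1) / q < m := by
      rw [Nat.div_lt_iff_lt_mul hq]
      omega
    -- i₀ is the last element of its layer
    have hlast : i₀ = pref (j₀ + 1) := by
      by_contra hcon
      have hlt' : i₀ + 1 ≤ pref (j₀ + 1) := by omega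
      have hstep := step j₀ hj₀r i₀ (by omega) hlt'
      have hkey := hg (f i₀) (f (i₀ + 1)) hstep.2.2 hstep.2.1 hstep.1
      have hmem : i₀ + 1 ∈ Finset.Icc 1 k := Finset.mem_Icc.2 ⟨by omega,
        le_trans hlt' (pref_le_k hj₀r)⟩
      exact absurd (hi₀max (i₀ + 1) hmem hkey.2.1) (by omega)
    -- all later layers are singletons
    have hone : ∀ t, j₀ < t → t < r → a t = 1 := by
      intro t ht1 ht2
      by_contra hcon
      have hat : 2 ≤ a t := by have := ha t ht2; omega
      have hit : pref (j₀ + 1) ≤ pref t := pref_mono (by omega)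
      set i := pref t + 1 with hi
      have hstep := step t ht2 i (le_refl i) (by rw [pref_succ]; omega)
      have hkey := hg (f i) (f (i + 1)) hstep.2.2 hstep.2.1 hstep.1
      have hmem : i ∈ Finset.Icc 1 k := Finset.mem_Icc.2 ⟨by omega,
        by have := pref_le_k (show t + 1 ≤ r by omega); have := pref_succ t; omega⟩
      exact absurd (hi₀max i hmem hkey.1) (by omega)
    -- compute i₀ from the sum
    have hsplit : pref (j₀ + 1) + ∑ t ∈ Finset.Ico (j₀ + 1) r, a t = k := by
      rw [hpref]
      beta_reduce
      rw [Finset.range_eq_Ico]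
      rw [← pref_r, hpref]
      beta_reduce
      rw [Finset.range_eq_Ico]
      exact Finset.sum_Ico_consecutive a (by omega) (by omega)
    have hconst : ∑ t ∈ Finset.Ico (j₀ + 1) r, a t = r - (j₀ + 1) := by
      rw [Finset.sum_congr rfl (fun t ht => by
        have h1 := (Finset.mem_Ico.1 ht).1
        have h2 := (Finset.mem_Ico.1 ht).2
        exact hone t (by omega) h2)]
      simp [Nat.card_Ico]
    omega
  · -- all elements go to the singleton suffix: contradiction with a 2-element layer
    push_neg at hex
    set i := pref j2 + 1 with hi
    have hstep := step j2 hj2r i (le_refl i) (by rw [pref_succ]; omega)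
    have hkey := hg (f i) (f (i + 1)) hstep.2.2 hstep.2.1 hstep.1
    have hmem : i ∈ Finset.Icc 1 k := Finset.mem_Icc.2 ⟨by omega,
      by have := pref_le_k (show j2 + 1 ≤ r by omega); have := pref_succ j2; omega⟩
    exact absurd hkey.1 (by have := hex i hmem; omega)
/-- Extend a tuple of permutations (for intervals `1, …, m-1`) to all of `ℕ`,
with the identity on interval `0`. -/
def extPerm (m q : ℕ) (π : Fin (m - 1) → Equiv.Perm (Fin q)) : ℕ → Equiv.Perm (Fin q) :=
  fun j => if h : 0 < j ∧ j < m then π ⟨j - 1, by omega⟩ else 1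

lemma gfun_at {m q : ℕ} (P : ℕ → Equiv.Perm (Fin q)) (hq : 0 < q) {jn : ℕ} (hjn : jn < m)
    (p : Fin q) : gfun m q P (jn * q + (p : ℕ) + 1) = ((P jn) p : ℕ) := by
  have hp : (p : ℕ) < q := p.isLt
  have hx2 : jn * q + (p : ℕ) + 1 ≤ m * q := by
    have : (jn + 1) * q ≤ m * q := Nat.mul_le_mul_right q (by omega)
    have h2 : (jn + 1) * q = jn * q + q := by ring
    omega
  have he : jn * q + (p : ℕ) + 1 - 1 = q * jn + (p : ℕ) := by
    rw [Nat.add_sub_cancel]; ring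
  have hdiv : (jn * q + (p : ℕ) + 1 - 1) / q = jn := by
    rw [he, Nat.mul_add_div hq, Nat.div_eq_of_lt hp]
    rfl
  have hmod : (jn * q + (p : ℕ) + 1 - 1) % q = (p : ℕ) := by
    rw [he, Nat.mul_add_mod, Nat.mod_eq_of_lt hp]
  rw [gfun_prefix P (by omega) hx2 hq]
  simp only [hdiv, hmod]

lemma card_le_A {k r : ℕ} (hrk : r < k) {a : ℕ → ℕ}
    (ha : ∀ i < r, 0 < a i) (hsum : ∑ i ∈ Finset.range r, a i = k)
    {τ : Finpartition (Finset.Icc 1 k)} (hτ : IsLayered r a τ)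
    (n : ℕ) : (Nat.factorial (n / (k - r))) ^ (k - r - 1) ≤ A n τ := by
  classical
  set m : ℕ := k - r with hmdef
  set q : ℕ := n / m with hqdef
  have hmq : m * q ≤ n := by
    rw [hqdef, mul_comm]
    exact Nat.div_mul_le_self n m
  -- the injection
  set Φ : (Fin (m - 1) → Equiv.Perm (Fin q)) → Finpartition (Finset.Icc 1 n) :=
    fun π => fiberPart n (gfun m q (extPerm m q π)) with hΦ
  have havoid : ∀ π, ¬ SetPartContains (Φ π) τ := by
    intro π
    exact avoid_main hrk ha hsum hτ hmdef hmq
      (fun x y hx hxy h => gfun_eq_lt (extPerm m q π) hx hxy h)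
  have hinj : Function.Injective
      (fun π : (Fin (m - 1) → Equiv.Perm (Fin q)) =>
        (⟨Φ π, havoid π⟩ : {σ : Finpartition (Finset.Icc 1 n) // ¬ SetPartContains σ τ})) := by
    intro π π' hππ'
    have hΦeq : Φ π = Φ π' := congrArg Subtype.val hππ'
    rcases Nat.eq_zero_or_pos q with hq0 | hq
    · funext j
      apply Equiv.ext
      intro p
      exact absurd p.isLt (by omega)
    · funext j
      apply Equiv.ext
      intro p
      have hjm : (j : ℕ) + 1 < m := by have := j.isLt; omega
      set x : ℕ := ((j : ℕ) + 1) * q + (p : ℕ) + 1 with hx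
      have hext : ∀ π'' : Fin (m - 1) → Equiv.Perm (Fin q),
          extPerm m q π'' ((j : ℕ) + 1) = π'' j := by
        intro π''
        have hfe : (⟨(j : ℕ) + 1 - 1, by omega⟩ : Fin (m - 1)) = j := Fin.ext (by simp)
        rw [extPerm, dif_pos ⟨by omega, hjm⟩, hfe]
      have hgx : gfun m q (extPerm m q π) x = ((π j) p : ℕ) := by
        rw [hx, gfun_at _ hq hjm p, hext]
      have hgx' : gfun m q (extPerm m q π') x = ((π' j) p : ℕ) := by
        rw [hx, gfun_at _ hq hjm p, hext]
      set b : ℕ := ((π j) p : ℕ) with hb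
      have hbq : b < q := ((π j) p).isLt
      have hgb : ∀ π'' : Fin (m - 1) → Equiv.Perm (Fin q),
          gfun m q (extPerm m q π'') (b + 1) = b := by
        intro π''
        have h0 : (0 : ℕ) * q + b + 1 = b + 1 := by ring
        have := gfun_at (extPerm m q π'') hq (show 0 < m by omega) ⟨b, hbq⟩
        rw [h0] at this
        rw [this, extPerm, dif_neg (by omega)]
        simp
      -- x and b+1 are in the same block for π, hence also for π'
      have hxmq : x ≤ m * q := by
        have : ((j : ℕ) + 1 + 1) * q ≤ m * q := Nat.mul_le_mul_right q (by omega)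
        have h2 : ((j : ℕ) + 1 + 1) * q = ((j : ℕ) + 1) * q + q := by ring
        have := p.isLt
        omega
      have hxn : x ∈ Finset.Icc 1 n := Finset.mem_Icc.2 ⟨by omega, by omega⟩
      have hbn : b + 1 ∈ Finset.Icc 1 n := Finset.mem_Icc.2 ⟨by omega,
        by have : q ≤ m * q := Nat.le_mul_of_pos_left q (by omega); omega⟩
      have hsb : SameBlock (Φ π) x (b + 1) :=
        sameBlock_fiberPart.2 ⟨hxn, hbn, by rw [hgx, hgb π, hb]⟩
      rw [hΦeq] at hsb
      have := (sameBlock_fiberPart.1 hsb).2.2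
      rw [hgx', hgb π'] at this
      apply Fin.val_injective
      rw [this, hb]
  have hcard := Nat.card_le_card_of_injective _ hinj
  have hcard2 : Nat.card (Fin (m - 1) → Equiv.Perm (Fin q)) =
      (Nat.factorial q) ^ (m - 1) := by
    rw [Nat.card_eq_fintype_card, Fintype.card_fun, Fintype.card_perm, Fintype.card_fin,
      Fintype.card_fin]
  rw [hcard2] at hcard
  exact hcard
lemma analytic_bound (m : ℕ) (hm : 0 < m) : ∃ c : ℝ, 0 < c ∧ ∀ n : ℕ, 0 < n →
    c ^ n * (n : ℝ) ^ ((n : ℝ) * (1 - 1 / (m : ℝ))) ≤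
      (Nat.factorial (n / m) : ℝ) ^ (m - 1) := by
  obtain ⟨E, hE⟩ : ∃ E : ℝ, E = Real.exp 1 * (2 * m) * Real.exp 1 := ⟨_, rfl⟩
  have hexp1 : (2 : ℝ) ≤ Real.exp 1 := by
    have := Real.add_one_le_exp (1 : ℝ)
    linarith
  have hexppos : (0 : ℝ) < Real.exp 1 := Real.exp_pos 1
  have hm1 : (1 : ℝ) ≤ (m : ℝ) := by exact_mod_cast hm
  have t1 : (2 : ℝ) * (2 * 1) ≤ Real.exp 1 * (2 * ↑m) :=
    mul_le_mul hexp1 (by linarith) (by norm_num) (by linarith)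
  have t2 : ((2 : ℝ) * (2 * 1)) * 2 ≤ (Real.exp 1 * (2 * ↑m)) * Real.exp 1 :=
    mul_le_mul t1 hexp1 (by norm_num) (by nlinarith)
  have hE1 : (1 : ℝ) ≤ E := by rw [hE]; nlinarith
  have hE0 : (0 : ℝ) < E := by linarith
  have hcn : (0 : ℝ) < (E ^ m)⁻¹ := inv_pos.2 (pow_pos hE0 m)
  refine ⟨(E ^ m)⁻¹, hcn, ?_⟩
  intro n hn
  set q : ℕ := n / m with hq
  have hn1 : (1 : ℝ) ≤ (n : ℝ) := by exact_mod_cast hn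
  have hinvm : (0 : ℝ) ≤ 1 / (m : ℝ) := by positivity
  have hinvm1 : 1 / (m : ℝ) ≤ 1 := by
    rw [div_le_one (by linarith)]; exact hm1
  have hnm : n < (q + 1) * m := by
    have h1 := Nat.div_add_mod n m
    have h2 := Nat.mod_lt n hm
    have h3 : (q + 1) * m = m * (n / m) + m := by rw [hq]; ring
    omega
  rcases Nat.eq_zero_or_pos q with hq0 | hqpos
  · -- small case : n < m, the RHS is 1
    rw [hq0]
    simp only [Nat.factorial_zero, Nat.cast_one, one_pow]
    have hstep1 : (n : ℝ) ^ ((n : ℝ) * (1 - 1 / (m : ℝ))) ≤ (n : ℝ) ^ ((n : ℕ) : ℝ) := by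
      apply Real.rpow_le_rpow_of_exponent_le hn1
      nlinarith [Nat.cast_nonneg (α := ℝ) n]
    rw [Real.rpow_natCast] at hstep1
    have hcn1 : (E ^ m)⁻¹ * (n : ℝ) ≤ 1 := by
      rw [inv_mul_le_iff₀ (pow_pos hE0 m), mul_one]
      have hnm2 : n < m := by rw [hq0] at hnm; simpa using hnm
      have hnm' : (n : ℝ) < (m : ℝ) := by exact_mod_cast hnm2
      have hEm : (m : ℝ) ≤ E ^ m := by
        calc (m : ℝ) ≤ E := by rw [hE]; nlinarith
          _ = E ^ 1 := (pow_one E).symm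
          _ ≤ E ^ m := pow_le_pow_right₀ hE1 hm
      linarith
    calc (E ^ m)⁻¹ ^ n * (n : ℝ) ^ ((n : ℝ) * (1 - 1 / (m : ℝ)))
        ≤ (E ^ m)⁻¹ ^ n * (n : ℝ) ^ n :=
          mul_le_mul_of_nonneg_left hstep1 (le_of_lt (pow_pos hcn n))
      _ = ((E ^ m)⁻¹ * (n : ℝ)) ^ n := (mul_pow _ _ n).symm
      _ ≤ 1 ^ n := pow_le_pow_left₀ (by positivity) hcn1 n
      _ = 1 := one_pow n
  · -- main case : q ≥ 1
    have hq1 : (1 : ℝ) ≤ (q : ℝ) := by exact_mod_cast hqpos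
    have hqn : q ≤ n := Nat.div_le_self n m
    have hn2mq : (n : ℝ) ≤ 2 * m * q := by
      have h1 : n ≤ 2 * q * m := by
        have : (q + 1) * m ≤ 2 * q * m := Nat.mul_le_mul_right m (by omega)
        omega
      have := (Nat.cast_le (α := ℝ)).2 h1
      push_cast at this ⊢
      linarith
    -- step 1 : bump the real exponent to a natural one
    have hstep1 : (n : ℝ) ^ ((n : ℝ) * (1 - 1 / (m : ℝ))) ≤
        (n : ℝ) ^ (((q + 1) * (m - 1) : ℕ) : ℝ) := by
      apply Real.rpow_le_rpow_of_exponent_le hn1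
      have hcast : (((q + 1) * (m - 1) : ℕ) : ℝ) = ((q : ℝ) + 1) * ((m : ℝ) - 1) := by
        push_cast [Nat.cast_sub hm]
        ring
      rw [hcast]
      have h1 : (n : ℝ) * (1 - 1 / (m : ℝ)) = (n : ℝ) * ((m : ℝ) - 1) / m := by
        field_simp
      rw [h1, div_le_iff₀ (by linarith)]
      have h2 : (n : ℝ) ≤ ((q : ℝ) + 1) * m := by exact_mod_cast le_of_lt hnm
      nlinarith
    rw [Real.rpow_natCast] at hstep1
    -- step 2 : factorial lower bound  q^q ≤ exp(1)^q * q!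
    have hfq0 : (0 : ℝ) < (Nat.factorial q : ℝ) := by positivity
    have hfact : (q : ℝ) ^ q ≤ Real.exp 1 ^ q * (Nat.factorial q : ℝ) := by
      have h1 := Real.pow_div_factorial_le_exp (x := (q : ℝ)) (by positivity) q
      rw [div_le_iff₀ hfq0] at h1
      calc (q : ℝ) ^ q ≤ Real.exp q * (Nat.factorial q : ℝ) := h1
        _ = Real.exp 1 ^ q * (Nat.factorial q : ℝ) := by rw [Real.exp_one_pow]
    -- step 3 : bound n^(q+1)
    have hnexp : (n : ℝ) ≤ Real.exp 1 ^ n := by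
      calc (n : ℝ) ≤ Real.exp n := by
            have := Real.add_one_le_exp (n : ℝ); linarith
        _ = Real.exp 1 ^ n := (Real.exp_one_pow n).symm
    have hstep3 : (n : ℝ) ^ (q + 1) ≤
        (Real.exp 1 ^ n * ((2 * m : ℝ)) ^ q * Real.exp 1 ^ q) * (Nat.factorial q : ℝ) := by
      calc (n : ℝ) ^ (q + 1) = (n : ℝ) ^ q * (n : ℝ) := by rw [pow_succ]
        _ ≤ (2 * (m : ℝ) * q) ^ q * Real.exp 1 ^ n :=
            mul_le_mul (pow_le_pow_left₀ (by positivity) hn2mq q) hnexp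
              (by positivity) (by positivity)
        _ = Real.exp 1 ^ n * ((2 * m : ℝ)) ^ q * (q : ℝ) ^ q := by ring
        _ ≤ Real.exp 1 ^ n * ((2 * m : ℝ)) ^ q *
              (Real.exp 1 ^ q * (Nat.factorial q : ℝ)) :=
            mul_le_mul_of_nonneg_left hfact (by positivity)
        _ = (Real.exp 1 ^ n * ((2 * m : ℝ)) ^ q * Real.exp 1 ^ q) *
              (Nat.factorial q : ℝ) := by ring
    -- step 4 : bound the junk factor by E^n
    have hjunk : Real.exp 1 ^ n * ((2 * m : ℝ)) ^ q * Real.exp 1 ^ q ≤ E ^ n := by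
      have h2m1 : (1 : ℝ) ≤ 2 * (m : ℝ) := by linarith
      have hone : (1 : ℝ) ≤ Real.exp 1 := by linarith
      calc Real.exp 1 ^ n * ((2 * m : ℝ)) ^ q * Real.exp 1 ^ q
          ≤ Real.exp 1 ^ n * ((2 * m : ℝ)) ^ n * Real.exp 1 ^ n :=
            mul_le_mul (mul_le_mul_of_nonneg_left (pow_le_pow_right₀ h2m1 hqn)
              (by positivity)) (pow_le_pow_right₀ hone hqn) (by positivity) (by positivity)
        _ = (Real.exp 1 * (2 * m) * Real.exp 1) ^ n := by ring
        _ = E ^ n := by rw [hE]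
    have hkey : (n : ℝ) ^ (q + 1) ≤ E ^ n * (Nat.factorial q : ℝ) :=
      le_trans hstep3 (mul_le_mul_of_nonneg_right hjunk (le_of_lt hfq0))
    have hcore : ((E ^ m)⁻¹) ^ n * (E ^ n) ^ (m - 1) ≤ 1 := by
      have h1 : ((E ^ m)⁻¹) ^ n * (E ^ n) ^ (m - 1) =
          (E ^ (m * n))⁻¹ * E ^ (n * (m - 1)) := by
        rw [inv_pow, ← pow_mul, ← pow_mul]
      rw [h1]
      have hle : n * (m - 1) ≤ m * n :=
        le_trans (Nat.mul_le_mul_left n (Nat.sub_le m 1)) (le_of_eq (Nat.mul_comm n m))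
      calc (E ^ (m * n))⁻¹ * E ^ (n * (m - 1))
          ≤ (E ^ (m * n))⁻¹ * E ^ (m * n) :=
            mul_le_mul_of_nonneg_left (pow_le_pow_right₀ hE1 hle) (by positivity)
        _ = 1 := inv_mul_cancel₀ (by positivity)
    calc (E ^ m)⁻¹ ^ n * (n : ℝ) ^ ((n : ℝ) * (1 - 1 / (m : ℝ)))
        ≤ (E ^ m)⁻¹ ^ n * (n : ℝ) ^ ((q + 1) * (m - 1)) :=
          mul_le_mul_of_nonneg_left hstep1 (le_of_lt (pow_pos hcn n))
      _ = (E ^ m)⁻¹ ^ n * ((n : ℝ) ^ (q + 1)) ^ (m - 1) := by rw [pow_mul]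
      _ ≤ (E ^ m)⁻¹ ^ n * ((E ^ n) * (Nat.factorial q : ℝ)) ^ (m - 1) :=
          mul_le_mul_of_nonneg_left (pow_le_pow_left₀ (by positivity) hkey (m - 1))
            (le_of_lt (pow_pos hcn n))
      _ = ((E ^ m)⁻¹ ^ n * (E ^ n) ^ (m - 1)) * (Nat.factorial q : ℝ) ^ (m - 1) := by
          rw [mul_pow]; ring
      _ ≤ 1 * (Nat.factorial q : ℝ) ^ (m - 1) :=
          mul_le_mul_of_nonneg_right hcore (by positivity)
      _ = (Nat.factorial q : ℝ) ^ (m - 1) := one_mul _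
/-- For a layered partition `L_{a_1,…,a_r}` of `[k]` with `r < k`, there is a
constant `c > 0` with `A_n(L_{a_1,…,a_r}) ≥ c^n · n^(n(1 - 1/(k-r)))` for all `n ≥ 1`. -/
theorem layered_lower_bound (k r : ℕ) (hr : 0 < r) (hrk : r < k) (a : ℕ → ℕ)
    (ha : ∀ i < r, 0 < a i) (hsum : ∑ i ∈ Finset.range r, a i = k)
    (τ : Finpartition (Finset.Icc 1 k)) (hτ : IsLayered r a τ) :
    ∃ c : ℝ, 0 < c ∧ ∀ n : ℕ, 0 < n →
      c ^ n * (n : ℝ) ^ ((n : ℝ) * (1 - 1 / ((k : ℝ) - r))) ≤ (A n τ : ℝ) := by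
  obtain ⟨c, hc, hbound⟩ := analytic_bound (k - r) (by omega)
  refine ⟨c, hc, ?_⟩
  intro n hn
  have hcast : (k : ℝ) - r = ((k - r : ℕ) : ℝ) := by
    rw [Nat.cast_sub (le_of_lt hrk)]
  rw [hcast]
  have h2 : (Nat.factorial (n / (k - r))) ^ (k - r - 1) ≤ A n τ :=
    card_le_A hrk ha hsum hτ n
  calc c ^ n * (n : ℝ) ^ ((n : ℝ) * (1 - 1 / ((k - r : ℕ) : ℝ)))
      ≤ (((Nat.factorial (n / (k - r))) ^ (k - r - 1) : ℕ) : ℝ) := by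
        push_cast
        exact hbound n hn
    _ ≤ (A n τ : ℝ) := Nat.cast_le.2 h2
end
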